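/- arXiv:1212.4908 — 7 statements merged into one kernel-verified Lean document; each statement's English description precedes it below -/
import Mathlib

section
/- Let G = (V,E) and G† = (V†,E†) be finite graphs, p, p* ∈ (0,1), q > 0, and e ↦ e† a bijection from E to E† such that, with A† := {e† : e ∈ E∖A}, the random-cluster measures satisfy μ_{p,q}^G(A) = μ_{p*,q}^{G†}(A†) for all A ⊆ E (as holds when G† is the planar dual of a connected planar graph G and p*/(1−p*) = q(1−p)/p). Then the heat-bath dynamics for the two random-cluster models have equal spectral gaps: λ(P̃_HB^{G,p,q}) = λ(P̃_HB^{G†,p*,q}). -/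
open Finset

noncomputable section

/-- `ξ` is an eigenvalue of the kernel `P` on the finite state space `Ω`. -/
def IsEigenvalue {Ω : Type*} [Fintype Ω] (P : Ω → Ω → ℝ) (ξ : ℝ) : Prop :=
  ∃ f : Ω → ℝ, f ≠ 0 ∧ ∀ x, (∑ y, P x y * f y) = ξ * f x

/-- The (absolute) spectral gap: `1` minus the largest absolute value of an
eigenvalue different from `1`. -/
def spectralGap {Ω : Type*} [Fintype Ω] (P : Ω → Ω → ℝ) : ℝ :=
  1 - sSup {r : ℝ | ∃ ξ : ℝ, IsEigenvalue P ξ ∧ ξ ≠ 1 ∧ r = |ξ|}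

variable {V E : Type*}

/-- The graph on the vertex set `V` induced by the edges in `A` (a multigraph
`(V, E)` is described by the map `ends` sending an edge to its two endpoints). -/
def subGraph (ends : E → V × V) (A : Finset E) : SimpleGraph V :=
  SimpleGraph.fromRel fun a b => ∃ e ∈ A, ends e = (a, b) ∨ ends e = (b, a)

/-- `c(A)`: the number of connected components of the spanning subgraph `(V, A)`. -/
def compCount (ends : E → V × V) (A : Finset E) : ℕ :=
  Nat.card (subGraph ends A).ConnectedComponent

/-- The endpoints of the edge `e` are connected in the spanning subgraph `(V, A)`. -/
def connectedIn (ends : E → V × V) (A : Finset E) (e : E) : Prop :=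
  (subGraph ends A).Reachable (ends e).1 (ends e).2

/-- The degree of the vertex `v` in the multigraph `(V, E)`. -/
def degree [Fintype E] [DecidableEq V] (ends : E → V × V) (v : V) : ℕ :=
  (univ.filter fun e => (ends e).1 = v ∨ (ends e).2 = v).card

/-- `E(σ)`: the set of edges whose endpoints receive the same color in `σ`. -/
def agreeSet [Fintype E] {q : ℕ} (ends : E → V × V) (σ : V → Fin q) : Finset E :=
  univ.filter fun e => σ (ends e).1 = σ (ends e).2

/-- Unnormalized random-cluster weight `(p/(1-p))^{|A|} q^{c(A)}`. -/
def rcWeight [Fintype E] (ends : E → V × V) (p q : ℝ) (A : Finset E) : ℝ :=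
  (p / (1 - p)) ^ A.card * q ^ compCount ends A

/-- The random-cluster measure on `G` with parameters `p` and `q`. -/
def rcMu [Fintype E] (ends : E → V × V) (p q : ℝ) (A : Finset E) : ℝ :=
  rcWeight ends p q A / ∑ B : Finset E, rcWeight ends p q B

/-- Transition matrix of the Swendsen–Wang dynamics for the random-cluster model. -/
def PSWRC [Fintype V] [DecidableEq V] [Fintype E] [DecidableEq E]
    (ends : E → V × V) (p : ℝ) (q : ℕ) (A B : Finset E) : ℝ :=
  ((q : ℝ) ^ compCount ends A)⁻¹ * (p / (1 - p)) ^ B.card *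
    ∑ σ : V → Fin q, (1 - p) ^ (agreeSet ends σ).card *
      (if A ∪ B ⊆ agreeSet ends σ then 1 else 0)

open scoped Classical in
/-- Transition matrix of the single-bond dynamics for the random-cluster model. -/
def PSBRC [Fintype E] [DecidableEq E] (ends : E → V × V) (p q : ℝ) (A B : Finset E) : ℝ :=
  (Fintype.card E : ℝ)⁻¹ * ∑ e : E,
    if connectedIn ends A e then
      (if B = insert e A then p else 0) + (if B = A.erase e then 1 - p else 0)
    else
      (if B = insert e A then p / q else 0) + (if B = A.erase e then 1 - p / q else 0)

/-- Transition matrix of the heat-bath dynamics for the random-cluster model. -/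
def PHBRC [Fintype E] [DecidableEq E] (ends : E → V × V) (p q : ℝ) (A B : Finset E) : ℝ :=
  (Fintype.card E : ℝ)⁻¹ * ∑ e : E,
    (rcMu ends p q B / (rcMu ends p q (insert e A) + rcMu ends p q (A.erase e))) *
      (if B.erase e = A.erase e then 1 else 0)


private lemma eig_transfer {Ω Ω' : Type*} [Fintype Ω] [Fintype Ω'] (Φ : Ω ≃ Ω')
    (P : Ω → Ω → ℝ) (P' : Ω' → Ω' → ℝ) (h : ∀ a b, P' (Φ a) (Φ b) = P a b) (ξ : ℝ)
    (hE : IsEigenvalue P ξ) : IsEigenvalue P' ξ := by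
  obtain ⟨f, hf, he⟩ := hE
  refine ⟨f ∘ Φ.symm, ?_, fun x => ?_⟩
  · intro h0
    apply hf
    funext a
    have := congrFun h0 (Φ a)
    simpa using this
  · have := he (Φ.symm x)
    calc ∑ y, P' x y * (f ∘ Φ.symm) y = ∑ b, P' x (Φ b) * f b := by
          rw [← Equiv.sum_comp Φ (fun y => P' x y * (f ∘ Φ.symm) y)]; simp
      _ = ξ * (f ∘ Φ.symm) x := by
          have hx : x = Φ (Φ.symm x) := (Φ.apply_symm_apply x).symm
          rw [hx]
          simp only [Function.comp, h, Equiv.symm_apply_apply]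
          exact this

private lemma insert_eq_insert_iff {E : Type*} [DecidableEq E] (e : E) (A B : Finset E) :
    insert e B = insert e A ↔ B.erase e = A.erase e := by
  constructor
  · intro h
    rw [← Finset.erase_insert_eq_erase B e, h, Finset.erase_insert_eq_erase]
  · intro h
    have hB : insert e (B.erase e) = insert e B := by
      ext x; by_cases hx : x = e <;> simp [hx]
    have hA : insert e (A.erase e) = insert e A := by
      ext x; by_cases hx : x = e <;> simp [hx]
    rw [← hB, h, hA]

/-- If the random-cluster measure of `(G, p, q)` is carried to
that of `(G†, p*, q)` by the dual map `A ↦ A† = {e† : e ∉ A}`, then the heat-bath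
dynamics for the two random-cluster models have equal spectral gaps. -/
theorem hb_rc_gap_dual_eq
    {V E V' E' : Type*} [Fintype V] [DecidableEq V] [Fintype E] [DecidableEq E]
    [Fintype V'] [DecidableEq V'] [Fintype E'] [DecidableEq E']
    (ends : E → V × V) (ends' : E' → V' × V')
    (p ps q : ℝ) (hp : p ∈ Set.Ioo (0 : ℝ) 1) (hps : ps ∈ Set.Ioo (0 : ℝ) 1) (hq : 0 < q)
    (d : E ≃ E')
    (hμ : ∀ A : Finset E, rcMu ends p q A = rcMu ends' ps q (Aᶜ.map d.toEmbedding)) :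
    spectralGap (PHBRC ends p q) = spectralGap (PHBRC ends' ps q) := by
  classical
  set Φ : Finset E ≃ Finset E' :=
    ⟨fun A => Aᶜ.map d.toEmbedding, fun B => (B.map d.symm.toEmbedding)ᶜ,
      fun A => by simp [Finset.map_map], fun B => by simp [Finset.map_map]⟩ with hΦ
  have key : ∀ A B : Finset E, PHBRC ends' ps q (Φ A) (Φ B) = PHBRC ends p q A B := by
    intro A B
    unfold PHBRC
    rw [Fintype.card_congr d.symm]
    congr 1
    rw [← Equiv.sum_comp d]
    refine Finset.sum_congr rfl fun e _ => ?_
    have h1 : insert (d e) (Φ A) = ((A.erase e)ᶜ).map d.toEmbedding := by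
      show insert (d e) (Aᶜ.map d.toEmbedding) = _
      rw [Finset.compl_erase, Finset.map_insert, Equiv.coe_toEmbedding]
    have h2 : (Φ A).erase (d e) = ((insert e A)ᶜ).map d.toEmbedding := by
      show (Aᶜ.map d.toEmbedding).erase (d e) = _
      rw [Finset.compl_insert, Finset.map_erase, Equiv.coe_toEmbedding]
    have h3 : (Φ B).erase (d e) = ((insert e B)ᶜ).map d.toEmbedding := by
      show (Bᶜ.map d.toEmbedding).erase (d e) = _
      rw [Finset.compl_insert, Finset.map_erase, Equiv.coe_toEmbedding]
    have h0 : rcMu ends' ps q (Φ B) = rcMu ends p q B := (hμ B).symm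
    have hind : (((insert e B)ᶜ).map d.toEmbedding = ((insert e A)ᶜ).map d.toEmbedding)
        ↔ (B.erase e = A.erase e) := by
      rw [Finset.map_inj, compl_inj_iff, insert_eq_insert_iff]
    rw [h1, h2, h3, h0, ← hμ (A.erase e), ← hμ (insert e A), if_congr hind rfl rfl,
      add_comm (rcMu ends p q (A.erase e))]
  have key' : ∀ A B : Finset E', PHBRC ends p q (Φ.symm A) (Φ.symm B) = PHBRC ends' ps q A B := by
    intro A B
    rw [← key (Φ.symm A) (Φ.symm B), Φ.apply_symm_apply, Φ.apply_symm_apply]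
  unfold spectralGap
  congr 1
  congr 1
  ext r
  constructor
  · rintro ⟨ξ, hξ, hne, rfl⟩
    exact ⟨ξ, eig_transfer Φ _ _ key ξ hξ, hne, rfl⟩
  · rintro ⟨ξ, hξ, hne, rfl⟩
    exact ⟨ξ, eig_transfer Φ.symm _ _ key' ξ hξ, hne, rfl⟩
end
end

section
/- Let G = (V,E) be a finite graph, q ≥ 1 an integer, β > 0 and p := 1 − e^{−β}. Then the Swendsen–Wang dynamics for the q-state Potts model on G at inverse temperature β and the Swendsen–Wang dynamics for the random-cluster model on G with parameters p and q have equal spectral gaps: λ(P_SW) = λ(P̃_SW). -/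
open Finset

noncomputable section

variable {V E : Type*}

/-- Unnormalized Potts weight `e^{β |E(σ)|}`. -/
def pottsWeight [Fintype E] (ends : E → V × V) (q : ℕ) (β : ℝ) (σ : V → Fin q) : ℝ :=
  Real.exp (β * (agreeSet ends σ).card)

/-- The `q`-state Potts measure on `G` at inverse temperature `β`. -/
def pottsPi [Fintype V] [DecidableEq V] [Fintype E] (ends : E → V × V) (q : ℕ) (β : ℝ)
    (σ : V → Fin q) : ℝ :=
  pottsWeight ends q β σ / ∑ τ : V → Fin q, pottsWeight ends q β τ

/-- Transition matrix of the heat-bath (Glauber) dynamics for the Potts model. -/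
def PHB [Fintype V] [DecidableEq V] [Fintype E] (ends : E → V × V) (q : ℕ) (β : ℝ)
    (σ τ : V → Fin q) : ℝ :=
  (Fintype.card V : ℝ)⁻¹ * ∑ v : V,
    (pottsPi ends q β τ / ∑ l : Fin q, pottsPi ends q β (Function.update σ v l)) *
      (if ∃ k : Fin q, τ = Function.update σ v k then 1 else 0)

/-- Transition matrix of the Swendsen–Wang dynamics for the Potts model,
with `p = 1 - e^{-β}`. -/
def PSW [Fintype V] [Fintype E] [DecidableEq E] (ends : E → V × V) (q : ℕ) (β : ℝ)
    (σ τ : V → Fin q) : ℝ :=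
  ∑ A ∈ (agreeSet ends σ ∩ agreeSet ends τ).powerset,
    (1 - Real.exp (-β)) ^ A.card * (Real.exp (-β)) ^ ((agreeSet ends σ).card - A.card) *
      ((q : ℝ) ^ compCount ends A)⁻¹

/-- The "percolation" half-step kernel. -/
def Mker [Fintype E] [DecidableEq E] (ends : E → V × V) (q : ℕ) (β : ℝ)
    (σ : V → Fin q) (A : Finset E) : ℝ :=
  if A ⊆ agreeSet ends σ then
    (1 - Real.exp (-β)) ^ A.card * Real.exp (-β) ^ ((agreeSet ends σ).card - A.card)
  else 0

/-- The "coloring" half-step kernel. -/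
def Nker [Fintype E] [DecidableEq E] (ends : E → V × V) (q : ℕ)
    (A : Finset E) (σ : V → Fin q) : ℝ :=
  if A ⊆ agreeSet ends σ then ((q : ℝ) ^ compCount ends A)⁻¹ else 0

lemma PSW_factor [Fintype V] [Fintype E] [DecidableEq E] (ends : E → V × V) (q : ℕ) (β : ℝ) :
    PSW ends q β = fun σ τ => ∑ A : Finset E, Mker ends q β σ A * Nker ends q A τ := by
  funext σ τ
  rw [PSW]
  rw [show ∀ f : Finset E → ℝ, (∑ A : Finset E, f A) =
      ∑ A ∈ (univ : Finset (Finset E)), f A from fun _ => rfl]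
  rw [← Finset.sum_filter_add_sum_filter_not univ
    (fun A => A ∈ (agreeSet ends σ ∩ agreeSet ends τ).powerset)]
  have h2 : ∑ A ∈ univ.filter
      (fun A => ¬ A ∈ (agreeSet ends σ ∩ agreeSet ends τ).powerset),
      Mker ends q β σ A * Nker ends q A τ = 0 := by
    apply Finset.sum_eq_zero
    intro A hA
    simp only [Finset.mem_filter, Finset.mem_powerset, Finset.subset_inter_iff] at hA
    rw [Mker, Nker]
    by_cases h1 : A ⊆ agreeSet ends σ <;> by_cases h2 : A ⊆ agreeSet ends τ <;>
      simp_all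
  rw [h2, add_zero]
  have h3 : univ.filter (fun A => A ∈ (agreeSet ends σ ∩ agreeSet ends τ).powerset)
      = (agreeSet ends σ ∩ agreeSet ends τ).powerset := by
    ext A; simp
  rw [h3]
  apply Finset.sum_congr rfl
  intro A hA
  simp only [Finset.mem_powerset, Finset.subset_inter_iff] at hA
  rw [Mker, Nker, if_pos hA.1, if_pos hA.2, mul_assoc]

lemma PSWRC_factor [Fintype V] [DecidableEq V] [Fintype E] [DecidableEq E]
    (ends : E → V × V) (q : ℕ) (β : ℝ) :
    PSWRC ends (1 - Real.exp (-β)) q =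
      fun A B => ∑ σ : V → Fin q, Nker ends q A σ * Mker ends q β σ B := by
  funext A B
  rw [PSWRC]
  have hr : (0:ℝ) < Real.exp (-β) := Real.exp_pos _
  rw [mul_assoc, Finset.mul_sum, Finset.mul_sum]
  apply Finset.sum_congr rfl
  intro σ _
  rw [Nker, Mker]
  have hsub : (1 : ℝ) - (1 - Real.exp (-β)) = Real.exp (-β) := by ring
  by_cases h1 : A ⊆ agreeSet ends σ <;> by_cases h2 : B ⊆ agreeSet ends σ
  · rw [if_pos h1, if_pos h2, if_pos (Finset.union_subset h1 h2), hsub, mul_one]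
    have hb : B.card ≤ (agreeSet ends σ).card := Finset.card_le_card h2
    rw [pow_sub₀ _ (ne_of_gt hr) hb, div_pow]
    field_simp
  · rw [if_pos h1, if_neg h2, if_neg (fun h => h2 (Finset.union_subset_iff.mp h).2)]
    simp
  · rw [if_neg h1, if_pos h2, if_neg (fun h => h1 (Finset.union_subset_iff.mp h).1)]
    simp
  · rw [if_neg h1, if_neg h2, if_neg (fun h => h1 (Finset.union_subset_iff.mp h).1)]
    simp

/-- Nonzero eigenvalues of `M * N` are eigenvalues of `N * M`. -/
lemma isEigenvalue_comm {Ω₁ Ω₂ : Type*} [Fintype Ω₁] [Fintype Ω₂]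
    (M : Ω₁ → Ω₂ → ℝ) (N : Ω₂ → Ω₁ → ℝ) {ξ : ℝ} (hξ : ξ ≠ 0)
    (h : IsEigenvalue (fun x y => ∑ z, M x z * N z y) ξ) :
    IsEigenvalue (fun z w => ∑ x, N z x * M x w) ξ := by
  obtain ⟨f, hf, heq⟩ := h
  set g : Ω₂ → ℝ := fun z => ∑ y, N z y * f y with hg
  have key : ∀ x, (∑ w, M x w * g w) = ξ * f x := by
    intro x
    calc ∑ w, M x w * g w = ∑ w, ∑ y, M x w * (N w y * f y) := by
          simp [hg, Finset.mul_sum]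
      _ = ∑ y, (∑ w, M x w * N w y) * f y := by
          rw [Finset.sum_comm]
          simp [Finset.sum_mul, mul_assoc]
      _ = ξ * f x := heq x
  refine ⟨g, ?_, ?_⟩
  · intro h0
    apply hf
    funext x
    have := key x
    rw [h0] at this
    simp at this
    rcases this with h | h
    · exact absurd h hξ
    · simp [h]
  · intro z
    calc ∑ w, (∑ x, N z x * M x w) * g w
        = ∑ w, ∑ x, N z x * (M x w * g w) := by
          simp [Finset.sum_mul, mul_assoc]
      _ = ∑ x, ∑ w, N z x * (M x w * g w) := Finset.sum_comm
      _ = ∑ x, N z x * (∑ w, M x w * g w) := by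
          simp [Finset.mul_sum]
      _ = ∑ x, N z x * (ξ * f x) := by
          apply Finset.sum_congr rfl; intro x _; rw [key x]
      _ = ξ * g z := by simp [hg, Finset.mul_sum]; apply Finset.sum_congr rfl; intros; ring
  
lemma sSup_insert_zero (s : Set ℝ) (hs : ∀ r ∈ s, 0 ≤ r) :
    sSup (insert (0:ℝ) s) = sSup s := by
  rcases s.eq_empty_or_nonempty with h | hne
  · simp [h, Real.sSup_empty]
  · by_cases hb : BddAbove s
    · rw [csSup_insert hb hne]
      obtain ⟨r, hr⟩ := hne
      exact sup_eq_right.mpr (le_trans (hs r hr) (le_csSup hb hr))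
    · rw [Real.sSup_of_not_bddAbove hb, Real.sSup_of_not_bddAbove]
      intro hb'
      exact hb (hb'.mono (Set.subset_insert _ _))

/-- The Swendsen–Wang dynamics for the `q`-state Potts model at
inverse temperature `β` and the Swendsen–Wang dynamics for the random-cluster
model with parameters `p = 1 − e^{−β}` and `q` have equal spectral gaps. -/
theorem sw_potts_rc_gap_eq
    {V E : Type*} [Fintype V] [DecidableEq V] [Fintype E] [DecidableEq E]
    (ends : E → V × V) (q : ℕ) (hq : 1 ≤ q) (β : ℝ) (hβ : 0 < β) :
    spectralGap (PSW ends q β) = spectralGap (PSWRC ends (1 - Real.exp (-β)) q) := by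
  have hfac1 := PSW_factor ends q β
  have hfac2 := PSWRC_factor (V := V) ends q β
  have hiff : ∀ ξ : ℝ, ξ ≠ 0 →
      (IsEigenvalue (PSW ends q β) ξ ↔
        IsEigenvalue (PSWRC ends (1 - Real.exp (-β)) q) ξ) := by
    intro ξ hξ
    rw [hfac1, hfac2]
    constructor
    · exact isEigenvalue_comm _ _ hξ
    · exact isEigenvalue_comm _ _ hξ
  rw [spectralGap, spectralGap]
  congr 1
  have key : insert (0:ℝ) {r : ℝ | ∃ ξ : ℝ, IsEigenvalue (PSW ends q β) ξ ∧ ξ ≠ 1 ∧ r = |ξ|}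
      = insert (0:ℝ) {r : ℝ | ∃ ξ : ℝ,
          IsEigenvalue (PSWRC ends (1 - Real.exp (-β)) q) ξ ∧ ξ ≠ 1 ∧ r = |ξ|} := by
    ext r
    simp only [Set.mem_insert_iff, Set.mem_setOf_eq]
    constructor
    · rintro (h | ⟨ξ, hξ, hξ1, rfl⟩)
      · exact Or.inl h
      · by_cases h0 : ξ = 0
        · exact Or.inl (by simp [h0])
        · exact Or.inr ⟨ξ, (hiff ξ h0).mp hξ, hξ1, rfl⟩
    · rintro (h | ⟨ξ, hξ, hξ1, rfl⟩)
      · exact Or.inl h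
      · by_cases h0 : ξ = 0
        · exact Or.inl (by simp [h0])
        · exact Or.inr ⟨ξ, (hiff ξ h0).mpr hξ, hξ1, rfl⟩
  calc sSup {r : ℝ | ∃ ξ : ℝ, IsEigenvalue (PSW ends q β) ξ ∧ ξ ≠ 1 ∧ r = |ξ|}
      = sSup (insert (0:ℝ)
          {r : ℝ | ∃ ξ : ℝ, IsEigenvalue (PSW ends q β) ξ ∧ ξ ≠ 1 ∧ r = |ξ|}) := by
        rw [sSup_insert_zero]
        rintro r ⟨ξ, _, _, rfl⟩; exact abs_nonneg ξ
    _ = sSup (insert (0:ℝ) {r : ℝ | ∃ ξ : ℝ,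
          IsEigenvalue (PSWRC ends (1 - Real.exp (-β)) q) ξ ∧ ξ ≠ 1 ∧ r = |ξ|}) := by
        rw [key]
    _ = sSup {r : ℝ | ∃ ξ : ℝ,
          IsEigenvalue (PSWRC ends (1 - Real.exp (-β)) q) ξ ∧ ξ ≠ 1 ∧ r = |ξ|} := by
        rw [sSup_insert_zero]
        rintro r ⟨ξ, _, _, rfl⟩; exact abs_nonneg ξ
end
end

section
/- Let G = (V,E) be a finite graph, p ∈ (0,1), and q ≥ 1 a real parameter. Then the heat-bath and single-bond dynamics for the random-cluster model on G with parameters p and q satisfy (1 − p(1 − 1/q)) · λ(P̃_HB) ≤ λ(P̃_SB) ≤ λ(P̃_HB). -/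
open Finset

noncomputable section

variable {V E : Type*}

set_option linter.unusedSectionVars false
set_option maxHeartbeats 1000000

namespace RCaux

open scoped RealInnerProductSpace

variable {Ω : Type*} [Fintype Ω] [DecidableEq Ω] [Nonempty Ω]

def Bform (μ : Ω → ℝ) (P : Ω → Ω → ℝ) (f : Ω → ℝ) : ℝ :=
  ∑ x, ∑ y, μ x * P x y * f x * f y

def norm2 (μ : Ω → ℝ) (f : Ω → ℝ) : ℝ := ∑ x, μ x * f x ^ 2

structure NiceChain (μ : Ω → ℝ) (P : Ω → Ω → ℝ) : Prop where
  nonneg : ∀ x y, 0 ≤ P x y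
  rowsum : ∀ x, ∑ y, P x y = 1
  rev : ∀ x y, μ x * P x y = μ y * P y x
  irr : ∀ f : Ω → ℝ, (∀ x, ∑ y, P x y * f y = f x) → ∀ x y, f x = f y
  psd : ∀ f : Ω → ℝ, 0 ≤ Bform μ P f

lemma abs_eig_le_one {P : Ω → Ω → ℝ} (h0 : ∀ x y, 0 ≤ P x y)
    (h1 : ∀ x, ∑ y, P x y = 1) {ξ : ℝ} (hξ : IsEigenvalue P ξ) : |ξ| ≤ 1 := by
  obtain ⟨f, hf0, hf⟩ := hξ
  obtain ⟨x, -, hx⟩ := Finset.exists_max_image Finset.univ (fun z => |f z|)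
    ⟨Classical.arbitrary Ω, mem_univ _⟩
  have hfx : 0 < |f x| := by
    obtain ⟨z, hz⟩ := Function.ne_iff.1 hf0
    exact lt_of_lt_of_le (abs_pos.2 hz) (hx z (mem_univ _))
  have key : |ξ| * |f x| ≤ 1 * |f x| := by
    have h2 : |ξ * f x| ≤ ∑ y, P x y * |f x| := by
      rw [← hf x]
      refine le_trans (Finset.abs_sum_le_sum_abs _ _) (Finset.sum_le_sum fun y _ => ?_)
      rw [abs_mul, abs_of_nonneg (h0 x y)]
      exact mul_le_mul_of_nonneg_left (hx y (mem_univ _)) (h0 x y)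
    rw [abs_mul] at h2
    calc |ξ| * |f x| ≤ ∑ y, P x y * |f x| := h2
      _ = 1 * |f x| := by rw [← Finset.sum_mul, h1 x]
  exact le_of_mul_le_mul_right key hfx

def Mmat (μ : Ω → ℝ) (P : Ω → Ω → ℝ) : Matrix Ω Ω ℝ :=
  Matrix.of fun x y => Real.sqrt (μ x) * P x y * (Real.sqrt (μ y))⁻¹

def Top (μ : Ω → ℝ) (P : Ω → Ω → ℝ) : EuclideanSpace ℝ Ω →ₗ[ℝ] EuclideanSpace ℝ Ω :=
  Matrix.toEuclideanLin (Mmat μ P)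

lemma Top_apply (μ : Ω → ℝ) (P : Ω → Ω → ℝ) (g : EuclideanSpace ℝ Ω) (x : Ω) :
    Top μ P g x = ∑ y, Mmat μ P x y * g y := by
  simp [Top, Matrix.toEuclideanLin_apply, Matrix.mulVec, dotProduct]

lemma einner (g h : EuclideanSpace ℝ Ω) : ⟪g, h⟫ = ∑ x, g x * h x := by
  simp [PiLp.inner_apply, RCLike.inner_apply, starRingEnd_apply]
  exact Finset.sum_congr rfl fun _ _ => mul_comm _ _

section Chain

variable {μ : Ω → ℝ} {P : Ω → Ω → ℝ} (hμ : ∀ x, 0 < μ x)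
include hμ

lemma sqrt_pos' (x : Ω) : 0 < Real.sqrt (μ x) := Real.sqrt_pos.2 (hμ x)

lemma Mmat_symm (hrev : ∀ x y, μ x * P x y = μ y * P y x) (x y : Ω) :
    Mmat μ P x y = Mmat μ P y x := by
  have hx := sqrt_pos' hμ x
  have hy := sqrt_pos' hμ y
  have hx2 : Real.sqrt (μ x) * Real.sqrt (μ x) = μ x := Real.mul_self_sqrt (hμ x).le
  have hy2 : Real.sqrt (μ y) * Real.sqrt (μ y) = μ y := Real.mul_self_sqrt (hμ y).le
  simp only [Mmat, Matrix.of_apply]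
  field_simp
  linear_combination P x y * hx2 - P y x * hy2 + hrev x y

lemma Top_symm (hrev : ∀ x y, μ x * P x y = μ y * P y x) : (Top μ P).IsSymmetric := by
  intro g h
  rw [einner, einner]
  simp only [Top_apply, Finset.sum_mul, Finset.mul_sum]
  rw [Finset.sum_comm]
  refine Finset.sum_congr rfl fun y _ => Finset.sum_congr rfl fun x _ => ?_
  rw [Mmat_symm hμ hrev x y]; ring

/-- transport an eigenvector of `P` to one of `Top`. -/
lemma isEig_iff (ξ : ℝ) :
    IsEigenvalue P ξ ↔ ∃ g : EuclideanSpace ℝ Ω, g ≠ 0 ∧ Top μ P g = ξ • g := by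
  constructor
  · rintro ⟨f, hf0, hf⟩
    refine ⟨WithLp.toLp 2 (fun x => Real.sqrt (μ x) * f x : Ω → ℝ), ?_, ?_⟩
    · intro h0
      apply hf0
      funext x
      have := congrFun (congrArg (fun (v : EuclideanSpace ℝ Ω) => (v : Ω → ℝ)) h0) x
      simp only [Pi.zero_apply, WithLp.ofLp_toLp, WithLp.ofLp_zero] at this ⊢
      have hx := (sqrt_pos' hμ x).ne'
      rcases mul_eq_zero.1 this with h | h
      · exact absurd h hx
      · exact h
    · ext x
      rw [Top_apply]
      simp only [Mmat, Matrix.of_apply, WithLp.ofLp_smul, WithLp.ofLp_toLp, Pi.smul_apply,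
        smul_eq_mul]
      have : ∀ y : Ω, Real.sqrt (μ x) * P x y * (Real.sqrt (μ y))⁻¹ *
          (Real.sqrt (μ y) * f y) = Real.sqrt (μ x) * (P x y * f y) := by
        intro y
        have hy := (sqrt_pos' hμ y).ne'
        field_simp
      rw [Finset.sum_congr rfl fun y _ => this y, ← Finset.mul_sum, hf x]
      ring
  · rintro ⟨g, hg0, hg⟩
    refine ⟨fun x => (Real.sqrt (μ x))⁻¹ * g x, ?_, ?_⟩
    · intro h0
      apply hg0
      ext x
      have := congrFun h0 x
      simp only [Pi.zero_apply] at this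
      have hx := (sqrt_pos' hμ x).ne'
      show g x = 0
      field_simp at this
      simpa using this
    · intro x
      have hx := (sqrt_pos' hμ x).ne'
      have hgx : Real.sqrt (μ x) * (∑ y, P x y * ((Real.sqrt (μ y))⁻¹ * g y)) = ξ * g x := by
        have h := congrFun (congrArg (fun (v : EuclideanSpace ℝ Ω) => (v : Ω → ℝ)) hg) x
        simp only [PiLp.smul_apply, Pi.smul_apply, smul_eq_mul] at h
        rw [Top_apply] at h
        simp only [Mmat, Matrix.of_apply] at h
        rw [← h, Finset.mul_sum]
        refine Finset.sum_congr rfl fun y _ => by ring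
      refine mul_left_cancel₀ hx ?_
      rw [hgx]
      field_simp


def wvec (μ : Ω → ℝ) : EuclideanSpace ℝ Ω := WithLp.toLp 2 (fun x => Real.sqrt (μ x) : Ω → ℝ)

lemma wvec_apply (x : Ω) : wvec μ x = Real.sqrt (μ x) := rfl

lemma Top_wvec (hrow : ∀ x, ∑ y, P x y = 1) : Top μ P (wvec μ) = wvec μ := by
  ext x
  show Top μ P (wvec μ) x = Real.sqrt (μ x)
  rw [Top_apply]
  simp only [Mmat, Matrix.of_apply, wvec_apply]
  show (∑ y, Real.sqrt (μ x) * P x y * (Real.sqrt (μ y))⁻¹ * Real.sqrt (μ y)) = Real.sqrt (μ x)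
  have : ∀ y : Ω, Real.sqrt (μ x) * P x y * (Real.sqrt (μ y))⁻¹ * Real.sqrt (μ y)
      = Real.sqrt (μ x) * P x y := by
    intro y
    have hy := (sqrt_pos' hμ y).ne'
    field_simp
  rw [Finset.sum_congr rfl fun y _ => this y, ← Finset.mul_sum, hrow x, mul_one]

lemma wvec_ne_zero : wvec μ ≠ (0 : EuclideanSpace ℝ Ω) := by
  intro h
  have := congrFun (congrArg (fun (v : EuclideanSpace ℝ Ω) => (v : Ω → ℝ)) h) (Classical.arbitrary Ω)
  exact absurd this (sqrt_pos' hμ _).ne'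

lemma inner_wvec_self : ⟪wvec μ, wvec μ⟫ = ∑ x, μ x := by
  rw [einner]
  exact Finset.sum_congr rfl fun x _ => Real.mul_self_sqrt (hμ x).le

lemma fixed_scal (hirr : ∀ f : Ω → ℝ, (∀ x, ∑ y, P x y * f y = f x) → ∀ x y, f x = f y)
    {g : EuclideanSpace ℝ Ω} (hg : Top μ P g = g) : ∃ t : ℝ, g = t • wvec μ := by
  set f : Ω → ℝ := fun x => (Real.sqrt (μ x))⁻¹ * g x with hf
  have hharm : ∀ x, ∑ y, P x y * f y = f x := by
    intro x
    have hx := (sqrt_pos' hμ x).ne'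
    have hgx : Real.sqrt (μ x) * (∑ y, P x y * f y) = g x := by
      have h : Top μ P g x = g x := by rw [hg]
      rw [Top_apply] at h
      simp only [Mmat, Matrix.of_apply] at h
      rw [← h, Finset.mul_sum]
      refine Finset.sum_congr rfl fun y _ => by simp only [hf]; ring
    refine mul_left_cancel₀ hx ?_
    rw [hgx, hf]
    field_simp
  set x₀ := Classical.arbitrary Ω
  refine ⟨f x₀, ?_⟩
  ext x
  show g x = (f x₀ • wvec μ : EuclideanSpace ℝ Ω) x
  have hconst := hirr f hharm x x₀
  have hx := (sqrt_pos' hμ x).ne'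
  show g x = f x₀ * Real.sqrt (μ x)
  rw [← hconst, hf]
  field_simp

lemma inner_Top (g : EuclideanSpace ℝ Ω) :
    ⟪g, Top μ P g⟫ = Bform μ P (fun x => (Real.sqrt (μ x))⁻¹ * g x) := by
  rw [einner, Bform]
  refine Finset.sum_congr rfl fun x _ => ?_
  rw [Top_apply, Finset.mul_sum]
  refine Finset.sum_congr rfl fun y _ => ?_
  simp only [Mmat, Matrix.of_apply]
  have hx := (sqrt_pos' hμ x).ne'
  have hy := (sqrt_pos' hμ y).ne'
  have hx2 : Real.sqrt (μ x) * Real.sqrt (μ x) = μ x := Real.mul_self_sqrt (hμ x).le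
  field_simp
  linear_combination (g x * P x y * g y) * hx2

lemma inner_self_eq_norm2 (g : EuclideanSpace ℝ Ω) :
    ⟪g, g⟫ = norm2 μ (fun x => (Real.sqrt (μ x))⁻¹ * g x) := by
  rw [einner, norm2]
  refine Finset.sum_congr rfl fun x _ => ?_
  have hx := (sqrt_pos' hμ x).ne'
  have hx2 : Real.sqrt (μ x) * Real.sqrt (μ x) = μ x := Real.mul_self_sqrt (hμ x).le
  field_simp
  linear_combination (g x * g x) * hx2

/-- The main spectral description of one chain when `2 ≤ |Ω|`. -/
lemma chain_spec (hP : NiceChain μ P) (hcard : 2 ≤ Fintype.card Ω) :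
    ∃ (s : ℝ) (g : EuclideanSpace ℝ Ω),
      spectralGap P = 1 - s ∧ 0 ≤ s ∧
      ⟪g, wvec μ⟫ = 0 ∧ ⟪g, g⟫ = 1 ∧ ⟪g, Top μ P g⟫ = s ∧
      (∀ h : EuclideanSpace ℝ Ω, ⟪h, wvec μ⟫ = 0 → ⟪h, Top μ P h⟫ ≤ s * ⟪h, h⟫) := by
  classical
  have hsym := Top_symm hμ hP.rev
  have hn : Module.finrank ℝ (EuclideanSpace ℝ Ω) = Fintype.card Ω := finrank_euclideanSpace
  set n := Fintype.card Ω with hndef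
  set b := hsym.eigenvectorBasis hn with hb
  set lam := hsym.eigenvalues hn with hlam
  have heig : ∀ i, Top μ P (b i) = lam i • b i := fun i => hsym.apply_eigenvectorBasis hn i
  have hbne : ∀ i, b i ≠ 0 := fun i => b.orthonormal.ne_zero i
  have hbinner : ∀ i j, ⟪b i, b j⟫ = if i = j then 1 else 0 := by
    intro i j
    have := b.orthonormal
    rw [orthonormal_iff_ite] at this
    exact this i j
  -- each lam i is an eigenvalue of P
  have hIsEig : ∀ i, IsEigenvalue P (lam i) :=
    fun i => (isEig_iff hμ (lam i)).2 ⟨b i, hbne i, heig i⟩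
  -- every eigenvalue of Top is some lam i
  have hTeig : ∀ (ξ : ℝ) (g : EuclideanSpace ℝ Ω), g ≠ 0 → Top μ P g = ξ • g →
      ∃ i, ξ = lam i := by
    intro ξ g hg0 hg
    by_contra hcon
    push_neg at hcon
    have hzero : ∀ i, ⟪b i, g⟫ = 0 := by
      intro i
      have h1 : ⟪Top μ P (b i), g⟫ = ⟪b i, Top μ P g⟫ := hsym (b i) g
      rw [heig i, hg, inner_smul_left, inner_smul_right] at h1
      simp only [RCLike.star_def, starRingEnd_apply, star_trivial] at h1
      have : (lam i - ξ) * ⟪b i, g⟫ = 0 := by linarith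
      rcases mul_eq_zero.1 this with h | h
      · exact absurd (by linarith : ξ = lam i) (hcon i)
      · exact h
    apply hg0
    have := b.sum_repr g
    rw [← this]
    refine Finset.sum_eq_zero fun i _ => ?_
    rw [b.repr_apply_apply, hzero i, zero_smul]
  have hξeig : ∀ ξ : ℝ, IsEigenvalue P ξ → ∃ i, ξ = lam i := by
    intro ξ hξ
    obtain ⟨g, hg0, hg⟩ := (isEig_iff hμ ξ).1 hξ
    exact hTeig ξ g hg0 hg
  -- nonnegativity of eigenvalues
  have hpos : ∀ i, 0 ≤ lam i := by
    intro i
    have h1 : ⟪b i, Top μ P (b i)⟫ = lam i := by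
      rw [heig i, inner_smul_right]
      simp [hbinner i i]
    rw [inner_Top hμ] at h1
    rw [← h1]
    exact hP.psd _
  have habs : ∀ i, lam i ≤ 1 := by
    intro i
    have := abs_eig_le_one hP.nonneg hP.rowsum (hIsEig i)
    exact le_trans (le_abs_self _) this
  -- the index with eigenvalue 1
  have hone : ∃ i₀, lam i₀ = 1 := by
    obtain ⟨i, hi⟩ := hTeig 1 (wvec μ) (wvec_ne_zero hμ) (by rw [Top_wvec hμ hP.rowsum, one_smul])
    exact ⟨i, hi.symm⟩
  obtain ⟨i₀, hi₀⟩ := hone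
  have hbscal : ∀ i, lam i = 1 → ∃ t : ℝ, t ≠ 0 ∧ b i = t • wvec μ := by
    intro i hi
    obtain ⟨t, ht⟩ := fixed_scal hμ hP.irr (by rw [heig i, hi, one_smul])
    refine ⟨t, ?_, ht⟩
    intro h0
    exact hbne i (by rw [ht, h0, zero_smul])
  have huniq : ∀ i, lam i = 1 → i = i₀ := by
    intro i hi
    by_contra hne
    obtain ⟨t, ht0, ht⟩ := hbscal i hi
    obtain ⟨s, hs0, hs⟩ := hbscal i₀ hi₀
    have h1 : ⟪b i, b i₀⟫ = 0 := by rw [hbinner]; simp [hne]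
    rw [ht, hs, inner_smul_left, inner_smul_right] at h1
    simp only [RCLike.star_def, starRingEnd_apply, star_trivial] at h1
    rw [inner_wvec_self hμ] at h1
    have hμpos : 0 < ∑ x, μ x :=
      Finset.sum_pos (fun x _ => hμ x) ⟨Classical.arbitrary Ω, mem_univ _⟩
    rcases mul_eq_zero.1 h1 with h | h
    · exact ht0 h
    · rcases mul_eq_zero.1 h with h' | h'
      · exact hs0 h'
      · exact hμpos.ne' h'
  -- the eigenvalue set
  set S : Set ℝ := {r : ℝ | ∃ ξ : ℝ, IsEigenvalue P ξ ∧ ξ ≠ 1 ∧ r = |ξ|} with hS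
  have hSsub : S ⊆ (fun i => lam i) '' {i | i ≠ i₀} := by
    rintro r ⟨ξ, hξ, hξ1, hr⟩
    obtain ⟨i, hi⟩ := hξeig ξ hξ
    have hii : i ≠ i₀ := fun h => hξ1 (by
      subst h; rw [hi, hi₀])
    have hii' : i ≠ i₀ := hii
    refine ⟨i, hii', ?_⟩
    rw [hr, hi, abs_of_nonneg (hpos i)]
  have hSsup : (fun i => lam i) '' {i | i ≠ i₀} ⊆ S := by
    rintro r ⟨i, hi, hr⟩
    refine ⟨lam i, hIsEig i, fun h => hi (huniq i h), ?_⟩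
    rw [← hr, abs_of_nonneg (hpos i)]
  have hSeq : S = (fun i => lam i) '' {i | i ≠ i₀} := le_antisymm hSsub hSsup
  have hSfin : S.Finite := by
    rw [hSeq]
    exact Set.Finite.image _ (Set.toFinite _)
  have hSne : S.Nonempty := by
    rw [hSeq]
    have : Nontrivial (Fin n) := by
      refine Fin.nontrivial_iff_two_le.2 ?_
      omega
    obtain ⟨j, hj⟩ := exists_ne i₀
    exact ⟨lam j, j, hj, rfl⟩
  have hmem := hSne.csSup_mem hSfin
  set s := sSup S with hsdef
  rw [hSeq] at hmem
  obtain ⟨k, hk, hks⟩ := hmem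
  have hub : ∀ i, i ≠ i₀ → lam i ≤ s := by
    intro i hi
    refine le_csSup hSfin.bddAbove ?_
    exact hSsup ⟨i, hi, rfl⟩
  obtain ⟨t, ht0, ht⟩ := hbscal i₀ hi₀
  have hk' : k ≠ i₀ := hk
  refine ⟨s, b k, rfl, by rw [← hks]; exact hpos k, ?_, by simp [hbinner k k], ?_, ?_⟩
  · -- ⟪b k, wvec⟫ = 0
    have h1 : ⟪b k, b i₀⟫ = 0 := by rw [hbinner]; simp [hk']
    rw [ht, inner_smul_right] at h1
    rcases mul_eq_zero.1 h1 with h | h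
    · exact absurd h ht0
    · exact h
  · rw [heig k, inner_smul_right]
    simp [hbinner k k, hks]
  · -- Rayleigh bound
    intro h hperp
    have hc : ∀ i, ⟪b i, h⟫ = ⟪h, b i⟫ := fun i => real_inner_comm _ _
    have hTh : ⟪h, Top μ P h⟫ = ∑ i, lam i * (⟪h, b i⟫ * ⟪h, b i⟫) := by
      rw [← b.sum_inner_mul_inner h (Top μ P h)]
      refine Finset.sum_congr rfl fun i _ => ?_
      have : ⟪b i, Top μ P h⟫ = lam i * ⟪b i, h⟫ := by
        rw [← hsym (b i) h, heig i, inner_smul_left]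
        simp only [RCLike.star_def, starRingEnd_apply, star_trivial]
      rw [this, hc i]
      ring
    have hhh : ⟪h, h⟫ = ∑ i, ⟪h, b i⟫ * ⟪h, b i⟫ := by
      rw [← b.sum_inner_mul_inner h h]
      exact Finset.sum_congr rfl fun i _ => by rw [hc i]
    have hci₀ : ⟪h, b i₀⟫ = 0 := by
      rw [ht, inner_smul_right, hperp, mul_zero]
    have hs0 : 0 ≤ s := by rw [← hks]; exact hpos k
    rw [hTh, hhh, Finset.mul_sum]
    refine Finset.sum_le_sum fun i _ => ?_
    by_cases hii : i = i₀
    · subst hii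
      rw [hci₀]
      simp
    · have := hub i hii
      have hsq : 0 ≤ ⟪h, b i⟫ * ⟪h, b i⟫ := mul_self_nonneg _
      nlinarith

end Chain

lemma spectralGap_eq_one_of_card_one {P : Ω → Ω → ℝ} (h1 : ∀ x, ∑ y, P x y = 1)
    (hcard : Fintype.card Ω = 1) : spectralGap P = 1 := by
  have hS : {r : ℝ | ∃ ξ : ℝ, IsEigenvalue P ξ ∧ ξ ≠ 1 ∧ r = |ξ|} = ∅ := by
    ext r
    simp only [Set.mem_setOf_eq, Set.mem_empty_iff_false, iff_false]
    rintro ⟨ξ, ⟨f, hf0, hf⟩, hξ1, -⟩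
    obtain ⟨x, hx⟩ := Fintype.card_eq_one_iff.1 hcard
    have hPxx : P x x = 1 := by
      rw [← h1 x, Fintype.sum_eq_single x fun y hy => absurd (hx y) hy]
    have hsum : ∑ y, P x y * f y = P x x * f x :=
      Fintype.sum_eq_single x fun y hy => absurd (hx y) hy
    have hfx : f x ≠ 0 := by
      obtain ⟨z, hz⟩ := Function.ne_iff.1 hf0
      rwa [hx z] at hz
    have := hf x
    rw [hsum, hPxx, one_mul] at this
    exact hξ1 (mul_right_cancel₀ hfx (by linarith)).symm
  rw [spectralGap, hS, Real.sSup_empty, sub_zero]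

theorem gap_comparison {μ : Ω → ℝ} (hμ : ∀ x, 0 < μ x) {P₁ P₂ : Ω → Ω → ℝ}
    (h₁ : NiceChain μ P₁) (h₂ : NiceChain μ P₂) {γ : ℝ} (hγ0 : 0 ≤ γ) (hγ1 : γ ≤ 1)
    (hle : ∀ f : Ω → ℝ, Bform μ P₁ f ≤ Bform μ P₂ f)
    (hge : ∀ f : Ω → ℝ, Bform μ P₂ f ≤ γ * Bform μ P₁ f + (1 - γ) * norm2 μ f) :
    γ * spectralGap P₁ ≤ spectralGap P₂ ∧ spectralGap P₂ ≤ spectralGap P₁ := by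
  rcases le_or_gt 2 (Fintype.card Ω) with hcard | hcard
  · obtain ⟨s₁, g₁, e₁, s₁0, p₁, n₁, v₁, r₁⟩ := chain_spec hμ h₁ hcard
    obtain ⟨s₂, g₂, e₂, s₂0, p₂, n₂, v₂, r₂⟩ := chain_spec hμ h₂ hcard
    have hle' : ∀ g : EuclideanSpace ℝ Ω, ⟪g, Top μ P₁ g⟫ ≤ ⟪g, Top μ P₂ g⟫ := by
      intro g; rw [inner_Top hμ, inner_Top hμ]; exact hle _
    have hge' : ∀ g : EuclideanSpace ℝ Ω,
        ⟪g, Top μ P₂ g⟫ ≤ γ * ⟪g, Top μ P₁ g⟫ + (1 - γ) * ⟪g, g⟫ := by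
      intro g; rw [inner_Top hμ, inner_Top hμ, inner_self_eq_norm2 hμ]; exact hge _
    have h12 : s₁ ≤ s₂ := by
      calc s₁ = ⟪g₁, Top μ P₁ g₁⟫ := v₁.symm
        _ ≤ ⟪g₁, Top μ P₂ g₁⟫ := hle' g₁
        _ ≤ s₂ * ⟪g₁, g₁⟫ := r₂ g₁ p₁
        _ = s₂ := by rw [n₁, mul_one]
    have h21 : s₂ ≤ γ * s₁ + (1 - γ) := by
      have hr := r₁ g₂ p₂
      calc s₂ = ⟪g₂, Top μ P₂ g₂⟫ := v₂.symm
        _ ≤ γ * ⟪g₂, Top μ P₁ g₂⟫ + (1 - γ) * ⟪g₂, g₂⟫ := hge' g₂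
        _ ≤ γ * (s₁ * ⟪g₂, g₂⟫) + (1 - γ) * ⟪g₂, g₂⟫ := by nlinarith
        _ = γ * s₁ + (1 - γ) := by rw [n₂]; ring
    rw [e₁, e₂]
    refine ⟨by nlinarith, by linarith⟩
  · have hcard1 : Fintype.card Ω = 1 := by
      have := Fintype.card_pos (α := Ω)
      omega
    rw [spectralGap_eq_one_of_card_one h₁.rowsum hcard1,
      spectralGap_eq_one_of_card_one h₂.rowsum hcard1]
    exact ⟨by nlinarith, le_refl 1⟩

end RCaux


namespace RCaux2

variable [Fintype V] [DecidableEq E] (ends : E → V × V)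

lemma subGraph_mono {A B : Finset E} (h : A ⊆ B) : subGraph ends A ≤ subGraph ends B := by
  intro a b hab
  rw [subGraph, SimpleGraph.fromRel_adj] at hab ⊢
  obtain ⟨hne, hr⟩ := hab
  refine ⟨hne, ?_⟩
  rcases hr with ⟨e, he, hh⟩ | ⟨e, he, hh⟩
  · exact Or.inl ⟨e, h he, hh⟩
  · exact Or.inr ⟨e, h he, hh⟩

lemma subGraph_insert_adj {e : E} {A : Finset E} {a b : V} :
    (subGraph ends (insert e A)).Adj a b ↔
      (subGraph ends A).Adj a b ∨ (a ≠ b ∧ (ends e = (a, b) ∨ ends e = (b, a))) := by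
  simp only [subGraph, SimpleGraph.fromRel_adj, Finset.mem_insert]
  constructor
  · rintro ⟨hne, hr⟩
    rcases hr with ⟨f, (rfl | hf), hh⟩ | ⟨f, (rfl | hf), hh⟩
    · exact Or.inr ⟨hne, hh⟩
    · exact Or.inl ⟨hne, Or.inl ⟨f, hf, hh⟩⟩
    · rcases hh with h | h
      · exact Or.inr ⟨hne, Or.inr h⟩
      · exact Or.inr ⟨hne, Or.inl h⟩
    · exact Or.inl ⟨hne, Or.inr ⟨f, hf, hh⟩⟩
  · rintro (⟨hne, hr⟩ | ⟨hne, hh⟩)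
    · refine ⟨hne, ?_⟩
      rcases hr with ⟨f, hf, hh⟩ | ⟨f, hf, hh⟩
      · exact Or.inl ⟨f, Or.inr hf, hh⟩
      · exact Or.inr ⟨f, Or.inr hf, hh⟩
    · exact ⟨hne, Or.inl ⟨e, Or.inl rfl, hh⟩⟩

/-- The relation describing reachability after inserting the edge `e`. -/
def reachRel (G : SimpleGraph V) (x y a b : V) : Prop :=
  G.Reachable a b ∨ (G.Reachable a x ∧ G.Reachable y b) ∨ (G.Reachable a y ∧ G.Reachable x b)

lemma reach_insert_to {e : E} {A : Finset E} {a b : V}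
    (w : (subGraph ends (insert e A)).Walk a b) :
    reachRel (subGraph ends A) (ends e).1 (ends e).2 a b := by
  set G := subGraph ends A
  induction w with
  | nil => exact Or.inl (SimpleGraph.Reachable.refl _)
  | @cons a c b h p ih =>
    rcases (subGraph_insert_adj ends).1 h with hadj | ⟨hne, hh⟩
    · -- compose G.Reachable a c with ih
      have hac : G.Reachable a c := hadj.reachable
      rcases ih with h1 | ⟨h1, h2⟩ | ⟨h1, h2⟩
      · exact Or.inl (hac.trans h1)
      · exact Or.inr (Or.inl ⟨hac.trans h1, h2⟩)
      · exact Or.inr (Or.inr ⟨hac.trans h1, h2⟩)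
    · rcases hh with h' | h'
      · -- a = x, c = y
        have hax : a = (ends e).1 := by rw [h']
        have hcy : c = (ends e).2 := by rw [h']
        subst hax; subst hcy
        rcases ih with h1 | ⟨h1, h2⟩ | ⟨h1, h2⟩
        · exact Or.inr (Or.inl ⟨SimpleGraph.Reachable.refl _, h1⟩)
        · exact Or.inl (h1.symm.trans h2)
        · exact Or.inl h2
      · -- a = y, c = x
        have hay : a = (ends e).2 := by rw [h']
        have hcx : c = (ends e).1 := by rw [h']
        subst hay; subst hcx
        rcases ih with h1 | ⟨h1, h2⟩ | ⟨h1, h2⟩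
        · exact Or.inr (Or.inr ⟨SimpleGraph.Reachable.refl _, h1⟩)
        · exact Or.inl h2
        · exact Or.inl (h1.symm.trans h2)

lemma reach_insert_of_reach {e : E} {A : Finset E} {a b : V}
    (h : (subGraph ends A).Reachable a b) : (subGraph ends (insert e A)).Reachable a b :=
  h.mono (subGraph_mono ends (Finset.subset_insert e A))

lemma reach_insert_endpoints (e : E) (A : Finset E) :
    (subGraph ends (insert e A)).Reachable (ends e).1 (ends e).2 := by
  by_cases hxy : (ends e).1 = (ends e).2
  · rw [hxy]
  · refine SimpleGraph.Adj.reachable ?_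
    rw [subGraph_insert_adj]
    exact Or.inr ⟨hxy, Or.inl (by simp)⟩

lemma connectedIn_insert (e : E) (A : Finset E) : connectedIn ends (insert e A) e :=
  reach_insert_endpoints ends e A

lemma reach_insert_iff {e : E} {A : Finset E} {a b : V} :
    (subGraph ends (insert e A)).Reachable a b ↔
      reachRel (subGraph ends A) (ends e).1 (ends e).2 a b := by
  constructor
  · rintro ⟨w⟩
    exact reach_insert_to ends w
  · rintro (h | ⟨h1, h2⟩ | ⟨h1, h2⟩)
    · exact reach_insert_of_reach ends h
    · exact ((reach_insert_of_reach ends h1).trans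
        (reach_insert_endpoints ends e A)).trans (reach_insert_of_reach ends h2)
    · exact ((reach_insert_of_reach ends h1).trans
        (reach_insert_endpoints ends e A).symm).trans (reach_insert_of_reach ends h2)

lemma reach_insert_iff_of_connected {e : E} {A : Finset E} (hc : connectedIn ends A e)
    {a b : V} :
    (subGraph ends (insert e A)).Reachable a b ↔ (subGraph ends A).Reachable a b := by
  rw [reach_insert_iff]
  constructor
  · rintro (h | ⟨h1, h2⟩ | ⟨h1, h2⟩)
    · exact h
    · exact (h1.trans hc).trans h2
    · exact (h1.trans hc.symm).trans h2
  · exact fun h => Or.inl h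

lemma compCount_insert_of_connected {e : E} {A : Finset E} (hc : connectedIn ends A e) :
    compCount ends (insert e A) = compCount ends A := by
  set G := subGraph ends A
  set G' := subGraph ends (insert e A)
  have hle : G ≤ G' := subGraph_mono ends (Finset.subset_insert e A)
  set φ : G.ConnectedComponent → G'.ConnectedComponent :=
    SimpleGraph.ConnectedComponent.map (SimpleGraph.Hom.ofLE hle) with hφ
  have hbij : Function.Bijective φ := by
    constructor
    · intro c c'
      refine SimpleGraph.ConnectedComponent.ind₂ (fun v w h => ?_) c c'
      simp only [hφ, SimpleGraph.ConnectedComponent.map_mk] at h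
      have := SimpleGraph.ConnectedComponent.exact h
      exact SimpleGraph.ConnectedComponent.sound
        ((reach_insert_iff_of_connected ends hc).1 this)
    · intro d
      refine SimpleGraph.ConnectedComponent.ind (fun v => ?_) d
      exact ⟨G.connectedComponentMk v, by simp [hφ, SimpleGraph.ConnectedComponent.map_mk]⟩
  rw [compCount, compCount]
  exact (Nat.card_eq_of_bijective φ hbij).symm

lemma compCount_insert_of_not_connected {e : E} {A : Finset E}
    (hc : ¬connectedIn ends A e) :
    compCount ends A = compCount ends (insert e A) + 1 := by
  classical
  set G := subGraph ends A
  set G' := subGraph ends (insert e A)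
  set x := (ends e).1
  set y := (ends e).2
  have hle : G ≤ G' := subGraph_mono ends (Finset.subset_insert e A)
  set φ : G.ConnectedComponent → G'.ConnectedComponent :=
    SimpleGraph.ConnectedComponent.map (SimpleGraph.Hom.ofLE hle) with hφ
  have hφmk : ∀ v, φ (G.connectedComponentMk v) = G'.connectedComponentMk v := by
    intro v; simp [hφ, SimpleGraph.ConnectedComponent.map_mk]
  set cx := G.connectedComponentMk x
  set cy := G.connectedComponentMk y
  have hxy : cx ≠ cy := fun h => hc (SimpleGraph.ConnectedComponent.exact h)
  have hkey : ∀ c c', φ c = φ c' → c = c' ∨ (c = cx ∧ c' = cy) ∨ (c = cy ∧ c' = cx) := by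
    intro c c'
    refine SimpleGraph.ConnectedComponent.ind₂ (fun v w h => ?_) c c'
    rw [hφmk, hφmk] at h
    have h2 := SimpleGraph.ConnectedComponent.exact h
    rcases (reach_insert_iff ends).1 h2 with h3 | ⟨h3, h4⟩ | ⟨h3, h4⟩
    · exact Or.inl (SimpleGraph.ConnectedComponent.sound h3)
    · exact Or.inr (Or.inl ⟨SimpleGraph.ConnectedComponent.sound h3,
        (SimpleGraph.ConnectedComponent.sound h4).symm⟩)
    · exact Or.inr (Or.inr ⟨SimpleGraph.ConnectedComponent.sound h3,
        (SimpleGraph.ConnectedComponent.sound h4).symm⟩)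
  have hφxy : φ cx = φ cy := by
    rw [hφmk, hφmk]
    exact SimpleGraph.ConnectedComponent.sound (reach_insert_endpoints ends e A)
  set ψ : {c : G.ConnectedComponent // ¬ c = cy} → G'.ConnectedComponent :=
    fun c => φ c.1 with hψ
  have hψbij : Function.Bijective ψ := by
    constructor
    · rintro ⟨c, hcy⟩ ⟨c', hcy'⟩ h
      simp only [hψ] at h
      rcases hkey c c' h with h1 | ⟨h1, h2⟩ | ⟨h1, h2⟩
      · exact Subtype.ext h1
      · exact absurd h2 hcy'
      · exact absurd h1 hcy
    · intro d
      refine SimpleGraph.ConnectedComponent.ind (fun v => ?_) d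
      by_cases hv : G.connectedComponentMk v = cy
      · refine ⟨⟨cx, hxy⟩, ?_⟩
        simp only [hψ]
        rw [hφxy, ← hv, hφmk]
      · exact ⟨⟨G.connectedComponentMk v, hv⟩, hφmk v⟩
  have h1 : Nat.card G.ConnectedComponent =
      Nat.card {c : G.ConnectedComponent // c = cy} +
        Nat.card {c : G.ConnectedComponent // ¬ c = cy} := by
    rw [← Nat.card_sum]
    exact Nat.card_congr (Equiv.sumCompl (fun c => c = cy)).symm
  haveI : Unique {c : G.ConnectedComponent // c = cy} :=
    ⟨⟨⟨cy, rfl⟩⟩, by rintro ⟨c, h⟩; exact Subtype.ext h⟩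
  have h2 : Nat.card {c : G.ConnectedComponent // c = cy} = 1 := Nat.card_unique
  have h3 : Nat.card {c : G.ConnectedComponent // ¬ c = cy} =
      Nat.card G'.ConnectedComponent := Nat.card_eq_of_bijective ψ hψbij
  show Nat.card G.ConnectedComponent = Nat.card G'.ConnectedComponent + 1
  rw [h1, h2, h3]
  omega

end RCaux2


/-- pair quadratic form expressions -/
def hbE (a b u v : ℝ) : ℝ :=
  a * u * ((b * v + a * u) / (b + a)) + b * v * ((b * v + a * u) / (b + a))

def sbEC (p a b u v : ℝ) : ℝ :=
  a * u * (p * v + (1 - p) * u) + b * v * (p * v + (1 - p) * u)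

def sbEN (p q a b u v : ℝ) : ℝ :=
  a * u * (p / q * v + (1 - p / q) * u) + b * v * (p * v + (1 - p) * u)

section PairAlgebra

variable {p q a b u v : ℝ}

lemma alg_hb_sq (ha : 0 < a) (hb : 0 < b) :
    hbE a b u v = (a * u + b * v) ^ 2 / (b + a) := by
  have hab : b + a ≠ 0 := by linarith
  rw [hbE]
  field_simp
  ring

lemma alg_hb_nonneg (ha : 0 < a) (hb : 0 < b) : 0 ≤ hbE a b u v := by
  rw [alg_hb_sq ha hb]
  positivity

lemma alg_hb_le_l2 (ha : 0 < a) (hb : 0 < b) : hbE a b u v ≤ a * u ^ 2 + b * v ^ 2 := by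
  rw [alg_hb_sq ha hb]
  rw [div_le_iff₀ (by linarith : (0:ℝ) < b + a)]
  nlinarith [mul_pos ha hb, sq_nonneg (u - v)]

lemma alg_C_eq (hp0 : 0 < p) (hp1 : p < 1) (ha : 0 < a) (hb : 0 < b)
    (hr : a * p = b * (1 - p)) : sbEC p a b u v = hbE a b u v := by
  have hba : b + a ≠ 0 := by positivity
  rw [alg_hb_sq ha hb, eq_div_iff hba, sbEC]
  linear_combination ((a * u + b * v) * (v - u)) * hr

lemma alg_N_eq' {r : ℝ} (ha : 0 < a) (hb : 0 < b) (hr : a * r = b * (1 - p)) :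
    a * u * (r * v + (1 - r) * u) + b * v * (p * v + (1 - p) * u)
      = (1 - (p - r)) * hbE a b u v + (p - r) * (a * u ^ 2 + b * v ^ 2) := by
  have hba : b + a ≠ 0 := by positivity
  rw [alg_hb_sq ha hb]
  field_simp
  linear_combination ((a * u + b * v) * (v - u)) * hr

lemma alg_N_eq (hp0 : 0 < p) (hp1 : p < 1) (hq : 1 ≤ q) (ha : 0 < a) (hb : 0 < b)
    (hr : a * (p / q) = b * (1 - p)) :
    sbEN p q a b u v
      = (1 - p * (1 - 1 / q)) * hbE a b u v + (p * (1 - 1 / q)) * (a * u ^ 2 + b * v ^ 2) := by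
  have hpq : p * (1 - 1 / q) = p - p / q := by ring
  rw [sbEN, hpq]
  exact alg_N_eq' ha hb hr

end PairAlgebra

namespace RCaux3

open scoped Classical

variable [Fintype V] [DecidableEq V] [Fintype E] [DecidableEq E]
variable (ends : E → V × V) {p q : ℝ}

section FinsetHelpers

variable (e : E) (A B S : Finset E)

lemma insert_erase_eq : insert e (A.erase e) = insert e A := by
  ext x
  simp only [Finset.mem_insert, Finset.mem_erase]
  constructor
  · rintro (rfl | ⟨-, h⟩)
    · exact Or.inl rfl
    · exact Or.inr h
  · rintro (rfl | h)
    · exact Or.inl rfl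
    · by_cases hx : x = e
      · exact Or.inl hx
      · exact Or.inr ⟨hx, h⟩

lemma insert_ne_erase : insert e A ≠ A.erase e := by
  intro h
  have h1 : e ∈ insert e A := Finset.mem_insert_self e A
  rw [h] at h1
  exact (Finset.notMem_erase e A) h1

lemma erase_eq_erase_iff :
    B.erase e = A.erase e ↔ B = insert e A ∨ B = A.erase e := by
  constructor
  · intro h
    by_cases he : e ∈ B
    · left
      rw [← Finset.insert_erase he, h, insert_erase_eq]
    · right
      rw [← h, Finset.erase_eq_of_notMem he]
  · rintro (rfl | rfl)
    · rw [Finset.erase_insert_eq_erase]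
    · rw [Finset.erase_idem]

lemma sum_ind (g : Finset E → ℝ) :
    (∑ B : Finset E, if B.erase e = A.erase e then g B else 0)
      = g (insert e A) + g (A.erase e) := by
  rw [← Finset.sum_filter]
  have hfil : Finset.univ.filter (fun B : Finset E => B.erase e = A.erase e)
      = {insert e A, A.erase e} := by
    ext B
    simp only [Finset.mem_filter, Finset.mem_univ, true_and, Finset.mem_insert,
      Finset.mem_singleton]
    exact erase_eq_erase_iff e A B
  rw [hfil, Finset.sum_pair (insert_ne_erase e A)]

lemma sum_pairs (g : Finset E → ℝ) :
    (∑ A : Finset E, g A)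
      = ∑ S ∈ Finset.univ.filter (fun S : Finset E => e ∉ S), (g S + g (insert e S)) := by
  rw [Finset.sum_add_distrib]
  rw [← Finset.sum_filter_add_sum_filter_not Finset.univ (fun A : Finset E => e ∉ A) g]
  congr 1
  refine (Finset.sum_bij' (fun (A : Finset E) (_ : A ∈ Finset.univ.filter
      (fun A : Finset E => ¬ e ∉ A)) => A.erase e)
    (fun (S : Finset E) (_ : S ∈ Finset.univ.filter (fun S : Finset E => e ∉ S)) => insert e S)
    ?_ ?_ ?_ ?_ ?_)
  · intro A hA
    simp only [Finset.mem_filter, Finset.mem_univ, true_and] at hA ⊢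
    exact Finset.notMem_erase e A
  · intro S hS
    simp only [Finset.mem_filter, Finset.mem_univ, true_and, not_not]
    exact Finset.mem_insert_self e S
  · intro A hA
    simp only [Finset.mem_filter, Finset.mem_univ, true_and, not_not] at hA
    exact Finset.insert_erase hA
  · intro S hS
    simp only [Finset.mem_filter, Finset.mem_univ, true_and] at hS
    exact Finset.erase_insert hS
  · intro A hA
    simp only [Finset.mem_filter, Finset.mem_univ, true_and, not_not] at hA
    rw [Finset.insert_erase hA]

end FinsetHelpers

section Measure

variable (hp0 : 0 < p) (hp1 : p < 1) (hq : 1 ≤ q)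
include hp0 hp1 hq

lemma hq0 : (0:ℝ) < q := by linarith

lemma rcWeight_pos (A : Finset E) : 0 < rcWeight ends p q A := by
  have h1 : 0 < p / (1 - p) := div_pos hp0 (by linarith)
  have h2 : (0:ℝ) < q := by linarith
  exact mul_pos (pow_pos h1 _) (pow_pos h2 _)

lemma Z_pos : 0 < ∑ B : Finset E, rcWeight ends p q B :=
  Finset.sum_pos (fun B _ => rcWeight_pos ends hp0 hp1 hq B) ⟨∅, Finset.mem_univ _⟩

lemma rcMu_pos (A : Finset E) : 0 < rcMu ends p q A :=
  div_pos (rcWeight_pos ends hp0 hp1 hq A) (Z_pos ends hp0 hp1 hq)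

lemma rcMu_insert {e : E} {A : Finset E} (he : e ∉ A) :
    rcMu ends p q (insert e A)
      = (p / (1 - p)) * (if connectedIn ends A e then 1 else q⁻¹) * rcMu ends p q A := by
  rw [rcMu, rcMu, rcWeight, rcWeight, Finset.card_insert_of_notMem he]
  by_cases hc : connectedIn ends A e
  · rw [RCaux2.compCount_insert_of_connected ends hc, if_pos hc]
    ring
  · rw [if_neg hc]
    have hcc := RCaux2.compCount_insert_of_not_connected ends hc
    rw [hcc]
    have hZ := (Z_pos ends hp0 hp1 hq).ne'
    have h1p : (1:ℝ) - p ≠ 0 := by linarith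
    have hqne : q ≠ 0 := by linarith
    rw [pow_succ, pow_succ]
    field_simp

end Measure

section Kernels

variable (p q : ℝ)

/-- heat-bath single-edge kernel -/
def hbK (e : E) (A B : Finset E) : ℝ :=
  (rcMu ends p q B / (rcMu ends p q (insert e A) + rcMu ends p q (A.erase e))) *
    (if B.erase e = A.erase e then 1 else 0)

/-- single-bond single-edge kernel -/
def sbK (e : E) (A B : Finset E) : ℝ :=
  if connectedIn ends A e then
    (if B = insert e A then p else 0) + (if B = A.erase e then 1 - p else 0)
  else
    (if B = insert e A then p / q else 0) + (if B = A.erase e then 1 - p / q else 0)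

variable {p q}
variable (hp0 : 0 < p) (hp1 : p < 1) (hq : 1 ≤ q)
include hp0 hp1 hq

lemma den_pos (e : E) (A : Finset E) :
    0 < rcMu ends p q (insert e A) + rcMu ends p q (A.erase e) :=
  add_pos (rcMu_pos ends hp0 hp1 hq _) (rcMu_pos ends hp0 hp1 hq _)

lemma hb_row (e : E) (A : Finset E) (f : Finset E → ℝ) :
    (∑ B, hbK ends p q e A B * f B)
      = (rcMu ends p q (insert e A) * f (insert e A)
          + rcMu ends p q (A.erase e) * f (A.erase e))
        / (rcMu ends p q (insert e A) + rcMu ends p q (A.erase e)) := by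
  have h1 : ∀ B, hbK ends p q e A B * f B
      = (if B.erase e = A.erase e then rcMu ends p q B * f B
          / (rcMu ends p q (insert e A) + rcMu ends p q (A.erase e)) else 0) := by
    intro B
    by_cases h : B.erase e = A.erase e
    · rw [hbK, if_pos h, if_pos h]; ring
    · rw [hbK, if_neg h, if_neg h]; ring
  rw [Finset.sum_congr rfl fun B _ => h1 B, sum_ind, add_div]

lemma hb_rowsum (e : E) (A : Finset E) : (∑ B, hbK ends p q e A B) = 1 := by
  have := hb_row ends hp0 hp1 hq e A (fun _ => 1)
  simp only [mul_one] at this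
  rw [this]
  exact div_self (den_pos ends hp0 hp1 hq e A).ne'

lemma sb_row (e : E) (A : Finset E) (f : Finset E → ℝ) :
    (∑ B, sbK ends p q e A B * f B)
      = (if connectedIn ends A e then p else p / q) * f (insert e A)
        + (if connectedIn ends A e then 1 - p else 1 - p / q) * f (A.erase e) := by
  by_cases hc : connectedIn ends A e
  · simp only [sbK, if_pos hc, add_mul, Finset.sum_add_distrib, ite_mul, zero_mul,
      Finset.sum_ite_eq', Finset.mem_univ, if_true]
  · simp only [sbK, if_neg hc, add_mul, Finset.sum_add_distrib, ite_mul, zero_mul,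
      Finset.sum_ite_eq', Finset.mem_univ, if_true]

lemma sb_rowsum (e : E) (A : Finset E) : (∑ B, sbK ends p q e A B) = 1 := by
  have := sb_row ends hp0 hp1 hq e A (fun _ => 1)
  simp only [mul_one] at this
  rw [this]
  by_cases hc : connectedIn ends A e <;> simp [hc]

lemma hbK_nonneg (e : E) (A B : Finset E) : 0 ≤ hbK ends p q e A B := by
  rw [hbK]
  refine mul_nonneg (div_nonneg (rcMu_pos ends hp0 hp1 hq B).le
    (den_pos ends hp0 hp1 hq e A).le) ?_
  split <;> norm_num

lemma pq_bounds : 0 < p / q ∧ p / q ≤ p := by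
  have hq0 : (0:ℝ) < q := by linarith
  exact ⟨div_pos hp0 hq0, div_le_self hp0.le hq⟩

lemma sbK_nonneg (e : E) (A B : Finset E) : 0 ≤ sbK ends p q e A B := by
  obtain ⟨h1, h2⟩ := pq_bounds (p := p) (q := q) hp0 hp1 hq
  rw [sbK]
  split <;> refine add_nonneg ?_ ?_ <;> split <;> linarith

lemma hbK_pos_insert (e : E) (A : Finset E) : 0 < hbK ends p q e A (insert e A) := by
  rw [hbK, if_pos (Finset.erase_insert_eq_erase A e), mul_one]
  exact div_pos (rcMu_pos ends hp0 hp1 hq _) (den_pos ends hp0 hp1 hq e A)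

lemma hbK_pos_erase (e : E) (A : Finset E) : 0 < hbK ends p q e A (A.erase e) := by
  rw [hbK, if_pos Finset.erase_idem, mul_one]
  exact div_pos (rcMu_pos ends hp0 hp1 hq _) (den_pos ends hp0 hp1 hq e A)

lemma sbK_pos_insert (e : E) (A : Finset E) : 0 < sbK ends p q e A (insert e A) := by
  obtain ⟨h1, h2⟩ := pq_bounds (p := p) (q := q) hp0 hp1 hq
  have hne : insert e A ≠ A.erase e := insert_ne_erase e A
  by_cases hc : connectedIn ends A e <;> simp [sbK, hc, hne] <;> linarith

lemma sbK_pos_erase (e : E) (A : Finset E) : 0 < sbK ends p q e A (A.erase e) := by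
  obtain ⟨h1, h2⟩ := pq_bounds (p := p) (q := q) hp0 hp1 hq
  have hne : A.erase e ≠ insert e A := (insert_ne_erase e A).symm
  by_cases hc : connectedIn ends A e <;> simp [sbK, hc, hne] <;> linarith

lemma hbK_rev (e : E) (A B : Finset E) :
    rcMu ends p q A * hbK ends p q e A B = rcMu ends p q B * hbK ends p q e B A := by
  by_cases h : B.erase e = A.erase e
  · have h2 : insert e A = insert e B := by
      rw [← insert_erase_eq e A, ← insert_erase_eq e B, h]
    rw [hbK, hbK, if_pos h, if_pos h.symm, h2, h]
    ring
  · rw [hbK, hbK, if_neg h, if_neg (fun hh => h hh.symm)]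
    ring

lemma sb_pair_ratio {e : E} {S : Finset E} (he : e ∉ S) :
    rcMu ends p q S * (if connectedIn ends S e then p else p / q)
      = rcMu ends p q (insert e S) * (1 - p) := by
  rw [rcMu_insert ends hp0 hp1 hq he]
  have h1p : (1:ℝ) - p ≠ 0 := by linarith
  have hq0 : q ≠ 0 := by intro h; rw [h] at hq; linarith
  by_cases hc : connectedIn ends S e
  · rw [if_pos hc, if_pos hc]
    field_simp
  · rw [if_neg hc, if_neg hc]
    field_simp

lemma sbK_rev_insert {e : E} {A : Finset E} (he : e ∉ A) :
    rcMu ends p q A * sbK ends p q e A (insert e A)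
      = rcMu ends p q (insert e A) * sbK ends p q e (insert e A) A := by
  have h1 : sbK ends p q e A (insert e A)
      = if connectedIn ends A e then p else p / q := by
    by_cases hc : connectedIn ends A e <;> simp [sbK, hc, insert_ne_erase e A]
  have h2 : sbK ends p q e (insert e A) A = 1 - p := by
    have hc : connectedIn ends (insert e A) e := RCaux2.connectedIn_insert ends e A
    rw [sbK, if_pos hc]
    have hA1 : A ≠ insert e (insert e A) := by
      rw [Finset.insert_idem]
      intro h
      exact he (h ▸ Finset.mem_insert_self e A)
    have hA2 : A = (insert e A).erase e := (Finset.erase_insert he).symm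
    rw [if_neg hA1, if_pos hA2]
    ring
  rw [h1, h2]
  exact sb_pair_ratio ends hp0 hp1 hq he

lemma sbK_rev (e : E) (A B : Finset E) :
    rcMu ends p q A * sbK ends p q e A B = rcMu ends p q B * sbK ends p q e B A := by
  by_cases hAB : A = B
  · subst hAB; rfl
  by_cases h1 : B = insert e A
  · have he : e ∉ A := by
      intro h
      exact hAB (by rw [h1, Finset.insert_eq_self.2 h])
    subst h1
    exact sbK_rev_insert ends hp0 hp1 hq he
  by_cases h2 : B = A.erase e
  · have heA : e ∈ A := by
      by_contra h
      exact hAB (by rw [h2, Finset.erase_eq_of_notMem h])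
    have heB : e ∉ B := by rw [h2]; exact Finset.notMem_erase e A
    have hA : A = insert e B := by
      rw [h2, insert_erase_eq, Finset.insert_eq_self.2 heA]
    rw [hA]
    exact (sbK_rev_insert ends hp0 hp1 hq heB).symm
  · have hz1 : sbK ends p q e A B = 0 := by
      simp [sbK, h1, h2]
    have h1' : A ≠ insert e B := by
      intro h
      by_cases heB : e ∈ B
      · rw [Finset.insert_eq_self.2 heB] at h; exact hAB h
      · exact h2 (by rw [h]; exact (Finset.erase_insert heB).symm)
    have h2' : A ≠ B.erase e := by
      intro h
      by_cases heB : e ∈ B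
      · exact h1 (by rw [h, insert_erase_eq, Finset.insert_eq_self.2 heB])
      · exact hAB (by rw [h, Finset.erase_eq_of_notMem heB])
    have hz2 : sbK ends p q e B A = 0 := by
      simp [sbK, h1', h2']
    rw [hz1, hz2, mul_zero, mul_zero]

end Kernels

section Irred

lemma irred_of_flips {P : Finset E → Finset E → ℝ}
    (hnn : ∀ A B, 0 ≤ P A B) (hrow : ∀ A, ∑ B, P A B = 1)
    (hins : ∀ A (e : E), 0 < P A (insert e A)) (hers : ∀ A (e : E), 0 < P A (A.erase e)) :
    ∀ f : Finset E → ℝ, (∀ A, ∑ B, P A B * f B = f A) → ∀ A B, f A = f B := by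
  intro f hf
  obtain ⟨A₀, -, hmax⟩ := Finset.exists_max_image Finset.univ f ⟨∅, Finset.mem_univ _⟩
  set M := f A₀ with hM
  have step : ∀ A, f A = M → ∀ B, 0 < P A B → f B = M := by
    intro A hA B hB
    have hsum : ∑ C, P A C * (M - f C) = 0 := by
      have h1 : ∑ C, P A C * (M - f C) = (∑ C, P A C) * M - ∑ C, P A C * f C := by
        rw [Finset.sum_mul, ← Finset.sum_sub_distrib]
        exact Finset.sum_congr rfl fun C _ => by ring
      rw [h1, hrow, hf, one_mul, hA]
      ring
    have hterm : ∀ C ∈ Finset.univ, 0 ≤ P A C * (M - f C) := by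
      intro C _
      exact mul_nonneg (hnn A C) (by linarith [hmax C (Finset.mem_univ C)])
    have hz := (Finset.sum_eq_zero_iff_of_nonneg hterm).1 hsum B (Finset.mem_univ B)
    rcases mul_eq_zero.1 hz with h | h
    · exact absurd h hB.ne'
    · linarith
  have reach : ∀ (n : ℕ) (A B : Finset E), ((A \ B) ∪ (B \ A)).card = n → f A = M → f B = M := by
    intro n
    induction n with
    | zero =>
      intro A B h hA
      have hAB : A = B := by
        have h0 := Finset.card_eq_zero.1 h
        have h1 : A \ B = ∅ := Finset.union_eq_empty.1 h0 |>.1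
        have h2 : B \ A = ∅ := Finset.union_eq_empty.1 h0 |>.2
        exact Finset.Subset.antisymm (Finset.sdiff_eq_empty_iff_subset.1 h1)
          (Finset.sdiff_eq_empty_iff_subset.1 h2)
      rwa [← hAB]
    | succ n ih =>
      intro A B h hA
      have hne : ((A \ B) ∪ (B \ A)).Nonempty := by
        rw [← Finset.card_pos, h]; omega
      obtain ⟨e, he⟩ := hne
      rw [Finset.mem_union] at he
      rcases he with he | he
      · rw [Finset.mem_sdiff] at he
        obtain ⟨heA, heB⟩ := he
        have hA' : f (A.erase e) = M := step A hA _ (hers A e)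
        refine ih (A.erase e) B ?_ hA'
        have hset : (A.erase e \ B) ∪ (B \ A.erase e) = ((A \ B) ∪ (B \ A)).erase e := by
          ext x
          simp only [Finset.mem_union, Finset.mem_sdiff, Finset.mem_erase]
          by_cases hx : x = e
          · subst hx; simp [heA, heB]
          · simp only [hx, ne_eq, not_false_eq_true, true_and] <;> tauto
        rw [hset, Finset.card_erase_of_mem
          (Finset.mem_union_left _ (Finset.mem_sdiff.2 ⟨heA, heB⟩)), h]
        omega
      · rw [Finset.mem_sdiff] at he
        obtain ⟨heB, heA⟩ := he
        have hA' : f (insert e A) = M := step A hA _ (hins A e)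
        refine ih (insert e A) B ?_ hA'
        have hset : (insert e A \ B) ∪ (B \ insert e A) = ((A \ B) ∪ (B \ A)).erase e := by
          ext x
          simp only [Finset.mem_union, Finset.mem_sdiff, Finset.mem_erase, Finset.mem_insert]
          by_cases hx : x = e
          · subst hx; simp [heA, heB]
          · simp only [hx, ne_eq, not_false_eq_true, true_and] <;> tauto
        rw [hset, Finset.card_erase_of_mem
          (Finset.mem_union_right _ (Finset.mem_sdiff.2 ⟨heB, heA⟩)), h]
        omega
  intro A B
  rw [reach _ A₀ A rfl rfl, reach _ A₀ B rfl rfl]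

end Irred

section Forms

variable {p q : ℝ}
variable (hp0 : 0 < p) (hp1 : p < 1) (hq : 1 ≤ q)

lemma Bform_eq (P : Finset E → Finset E → ℝ) (k : E → Finset E → Finset E → ℝ)
    (hPk : ∀ A B, P A B = (Fintype.card E : ℝ)⁻¹ * ∑ e, k e A B) (f : Finset E → ℝ) :
    RCaux.Bform (rcMu ends p q) P f
      = (Fintype.card E : ℝ)⁻¹ * ∑ e, ∑ S ∈ Finset.univ.filter (fun S : Finset E => e ∉ S),
          (rcMu ends p q S * f S * (∑ B, k e S B * f B)
            + rcMu ends p q (insert e S) * f (insert e S) * (∑ B, k e (insert e S) B * f B)) := by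
  set μ := rcMu ends p q
  set c := (Fintype.card E : ℝ)⁻¹
  have h1 : ∀ A, (∑ B, μ A * P A B * f A * f B)
      = c * ∑ e, (μ A * f A * (∑ B, k e A B * f B)) := by
    intro A
    have h2 : ∀ B, μ A * P A B * f A * f B = c * ∑ e, (μ A * f A * (k e A B * f B)) := by
      intro B
      rw [hPk A B]
      rw [show μ A * (c * ∑ e, k e A B) * f A * f B
          = c * ((∑ e, k e A B) * (μ A * f A * f B)) from by ring]
      rw [Finset.sum_mul]
      congr 1
      exact Finset.sum_congr rfl fun e _ => by ring
    rw [Finset.sum_congr rfl fun B _ => h2 B, ← Finset.mul_sum]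
    congr 1
    rw [Finset.sum_comm]
    exact Finset.sum_congr rfl fun e _ => by rw [← Finset.mul_sum]
  rw [RCaux.Bform, Finset.sum_congr rfl fun A _ => h1 A, ← Finset.mul_sum]
  congr 1
  rw [Finset.sum_comm]
  exact Finset.sum_congr rfl fun e _ => sum_pairs e _

lemma norm2_pairs (e : E) (f : Finset E → ℝ) :
    (∑ S ∈ Finset.univ.filter (fun S : Finset E => e ∉ S),
        (rcMu ends p q S * f S ^ 2 + rcMu ends p q (insert e S) * f (insert e S) ^ 2))
      = RCaux.norm2 (rcMu ends p q) f :=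
  (sum_pairs e (fun A => rcMu ends p q A * f A ^ 2)).symm

include hp0 hp1 hq

lemma Bform_hb (f : Finset E → ℝ) :
    RCaux.Bform (rcMu ends p q) (PHBRC ends p q) f
      = (Fintype.card E : ℝ)⁻¹ * ∑ e, ∑ S ∈ Finset.univ.filter (fun S : Finset E => e ∉ S),
          hbE (rcMu ends p q S) (rcMu ends p q (insert e S)) (f S) (f (insert e S)) := by
  rw [Bform_eq ends (PHBRC ends p q) (hbK ends p q) (fun A B => rfl) f]
  congr 1
  refine Finset.sum_congr rfl fun e _ => Finset.sum_congr rfl fun S hS => ?_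
  have he : e ∉ S := (Finset.mem_filter.1 hS).2
  rw [hb_row ends hp0 hp1 hq, hb_row ends hp0 hp1 hq,
    Finset.erase_eq_of_notMem he, Finset.insert_idem, Finset.erase_insert he, hbE]

lemma Bform_sb (f : Finset E → ℝ) :
    RCaux.Bform (rcMu ends p q) (PSBRC ends p q) f
      = (Fintype.card E : ℝ)⁻¹ * ∑ e, ∑ S ∈ Finset.univ.filter (fun S : Finset E => e ∉ S),
          (if connectedIn ends S e then
            sbEC p (rcMu ends p q S) (rcMu ends p q (insert e S)) (f S) (f (insert e S))
          else
            sbEN p q (rcMu ends p q S) (rcMu ends p q (insert e S)) (f S) (f (insert e S))) := by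
  rw [Bform_eq ends (PSBRC ends p q) (sbK ends p q) (fun A B => rfl) f]
  congr 1
  refine Finset.sum_congr rfl fun e _ => Finset.sum_congr rfl fun S hS => ?_
  have he : e ∉ S := (Finset.mem_filter.1 hS).2
  have hIns := RCaux2.connectedIn_insert ends e S
  rw [sb_row ends hp0 hp1 hq, sb_row ends hp0 hp1 hq,
    Finset.erase_eq_of_notMem he, Finset.insert_idem, Finset.erase_insert he]
  simp only [hIns, if_true]
  by_cases hc : connectedIn ends S e
  · simp only [hc, if_true, sbEC]; try ring
  · simp only [hc, if_false, sbEN]; try ring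

lemma ratio_C {e : E} {S : Finset E} (he : e ∉ S) (hc : connectedIn ends S e) :
    rcMu ends p q S * p = rcMu ends p q (insert e S) * (1 - p) := by
  have := sb_pair_ratio ends hp0 hp1 hq he
  rwa [if_pos hc] at this

lemma ratio_N {e : E} {S : Finset E} (he : e ∉ S) (hc : ¬connectedIn ends S e) :
    rcMu ends p q S * (p / q) = rcMu ends p q (insert e S) * (1 - p) := by
  have := sb_pair_ratio ends hp0 hp1 hq he
  rwa [if_neg hc] at this

lemma gamma_bounds : 0 ≤ 1 - p * (1 - 1 / q) ∧ 1 - p * (1 - 1 / q) ≤ 1 := by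
  have hq0 : (0:ℝ) < q := by linarith
  have h1 : 1 / q ≤ 1 := by rw [div_le_one hq0]; exact hq
  have h2 : 0 < 1 / q := by positivity
  constructor <;> nlinarith

/-- per-pair comparison -/
lemma pair_cmp {e : E} {S : Finset E} (he : e ∉ S) (u v : ℝ) :
    (hbE (rcMu ends p q S) (rcMu ends p q (insert e S)) u v
        ≤ (if connectedIn ends S e then sbEC p (rcMu ends p q S) (rcMu ends p q (insert e S)) u v
          else sbEN p q (rcMu ends p q S) (rcMu ends p q (insert e S)) u v))
    ∧ ((if connectedIn ends S e then sbEC p (rcMu ends p q S) (rcMu ends p q (insert e S)) u v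
          else sbEN p q (rcMu ends p q S) (rcMu ends p q (insert e S)) u v)
        ≤ (1 - p * (1 - 1 / q)) * hbE (rcMu ends p q S) (rcMu ends p q (insert e S)) u v
          + (p * (1 - 1 / q)) * (rcMu ends p q S * u ^ 2 + rcMu ends p q (insert e S) * v ^ 2)) := by
  set a := rcMu ends p q S
  set b := rcMu ends p q (insert e S)
  have ha : 0 < a := rcMu_pos ends hp0 hp1 hq S
  have hb : 0 < b := rcMu_pos ends hp0 hp1 hq _
  have hγ := gamma_bounds (p := p) (q := q) hp0 hp1 hq
  have hl2 := alg_hb_le_l2 (u := u) (v := v) ha hb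
  have hnn := alg_hb_nonneg (u := u) (v := v) ha hb
  by_cases hc : connectedIn ends S e
  · rw [if_pos hc]
    have heq := alg_C_eq (u := u) (v := v) hp0 hp1 ha hb (ratio_C ends hp0 hp1 hq he hc)
    constructor
    · rw [heq]
    · rw [heq]
      nlinarith [hγ.1, hγ.2]
  · rw [if_neg hc]
    have heq := alg_N_eq (u := u) (v := v) hp0 hp1 hq ha hb (ratio_N ends hp0 hp1 hq he hc)
    constructor
    · rw [heq]
      nlinarith [hγ.1, hγ.2]
    · rw [heq]

lemma Bform_hb_nonneg (f : Finset E → ℝ) :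
    0 ≤ RCaux.Bform (rcMu ends p q) (PHBRC ends p q) f := by
  rw [Bform_hb ends hp0 hp1 hq f]
  refine mul_nonneg (by positivity) ?_
  refine Finset.sum_nonneg fun e _ => Finset.sum_nonneg fun S hS => ?_
  exact alg_hb_nonneg (rcMu_pos ends hp0 hp1 hq _) (rcMu_pos ends hp0 hp1 hq _)

lemma Bform_hb_le_sb (f : Finset E → ℝ) :
    RCaux.Bform (rcMu ends p q) (PHBRC ends p q) f
      ≤ RCaux.Bform (rcMu ends p q) (PSBRC ends p q) f := by
  rw [Bform_hb ends hp0 hp1 hq f, Bform_sb ends hp0 hp1 hq f]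
  refine mul_le_mul_of_nonneg_left ?_ (by positivity)
  refine Finset.sum_le_sum fun e _ => Finset.sum_le_sum fun S hS => ?_
  exact (pair_cmp ends hp0 hp1 hq (Finset.mem_filter.1 hS).2 _ _).1

lemma Bform_sb_le (hE : Fintype.card E ≠ 0) (f : Finset E → ℝ) :
    RCaux.Bform (rcMu ends p q) (PSBRC ends p q) f
      ≤ (1 - p * (1 - 1 / q)) * RCaux.Bform (rcMu ends p q) (PHBRC ends p q) f
        + (1 - (1 - p * (1 - 1 / q))) * RCaux.norm2 (rcMu ends p q) f := by
  have hc0 : (0:ℝ) ≤ (Fintype.card E : ℝ)⁻¹ := by positivity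
  have hcE : ((Fintype.card E : ℝ))⁻¹ * (Fintype.card E : ℝ) = 1 := by
    rw [inv_mul_cancel₀]
    exact_mod_cast hE
  have key : ∀ e : E, (∑ S ∈ Finset.univ.filter (fun S : Finset E => e ∉ S),
      (if connectedIn ends S e then
        sbEC p (rcMu ends p q S) (rcMu ends p q (insert e S)) (f S) (f (insert e S))
      else
        sbEN p q (rcMu ends p q S) (rcMu ends p q (insert e S)) (f S) (f (insert e S))))
      ≤ (1 - p * (1 - 1 / q)) * (∑ S ∈ Finset.univ.filter (fun S : Finset E => e ∉ S),
            hbE (rcMu ends p q S) (rcMu ends p q (insert e S)) (f S) (f (insert e S)))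
          + (p * (1 - 1 / q)) * RCaux.norm2 (rcMu ends p q) f := by
    intro e
    have h1 := Finset.sum_le_sum (s := Finset.univ.filter (fun S : Finset E => e ∉ S))
      (fun S hS => (pair_cmp ends hp0 hp1 hq (Finset.mem_filter.1 hS).2
        (f S) (f (insert e S))).2)
    rw [Finset.sum_add_distrib, ← Finset.mul_sum, ← Finset.mul_sum,
      norm2_pairs ends e f] at h1
    exact h1
  rw [Bform_hb ends hp0 hp1 hq f, Bform_sb ends hp0 hp1 hq f]
  calc (Fintype.card E : ℝ)⁻¹ * ∑ e : E, ∑ S ∈ Finset.univ.filter (fun S : Finset E => e ∉ S),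
      (if connectedIn ends S e then
        sbEC p (rcMu ends p q S) (rcMu ends p q (insert e S)) (f S) (f (insert e S))
      else
        sbEN p q (rcMu ends p q S) (rcMu ends p q (insert e S)) (f S) (f (insert e S)))
      ≤ (Fintype.card E : ℝ)⁻¹ * ∑ e : E,
          ((1 - p * (1 - 1 / q)) * (∑ S ∈ Finset.univ.filter (fun S : Finset E => e ∉ S),
            hbE (rcMu ends p q S) (rcMu ends p q (insert e S)) (f S) (f (insert e S)))
          + (p * (1 - 1 / q)) * RCaux.norm2 (rcMu ends p q) f) := by
        exact mul_le_mul_of_nonneg_left (Finset.sum_le_sum fun e _ => key e) hc0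
    _ = (1 - p * (1 - 1 / q)) * ((Fintype.card E : ℝ)⁻¹ * ∑ e : E,
          ∑ S ∈ Finset.univ.filter (fun S : Finset E => e ∉ S),
            hbE (rcMu ends p q S) (rcMu ends p q (insert e S)) (f S) (f (insert e S)))
        + (1 - (1 - p * (1 - 1 / q))) * RCaux.norm2 (rcMu ends p q) f := by
        rw [Finset.sum_add_distrib, ← Finset.mul_sum, Finset.sum_const, Finset.card_univ,
          nsmul_eq_mul, mul_add]
        have h2 : (Fintype.card E : ℝ)⁻¹ * ((Fintype.card E : ℝ)
            * ((p * (1 - 1 / q)) * RCaux.norm2 (rcMu ends p q) f))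
            = (1 - (1 - p * (1 - 1 / q))) * RCaux.norm2 (rcMu ends p q) f := by
          rw [← mul_assoc, hcE]
          ring
        rw [← h2]
        ring

end Forms

end RCaux3



section Assembly

variable {V E : Type*} [Fintype V] [DecidableEq V] [Fintype E] [DecidableEq E]
variable (ends : E → V × V) {p q : ℝ}

open RCaux3

lemma PHBRC_kernel (A B : Finset E) :
    PHBRC ends p q A B = (Fintype.card E : ℝ)⁻¹ * ∑ e, hbK ends p q e A B := rfl

lemma PSBRC_kernel (A B : Finset E) :
    PSBRC ends p q A B = (Fintype.card E : ℝ)⁻¹ * ∑ e, sbK ends p q e A B := rfl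

variable (hp0 : 0 < p) (hp1 : p < 1) (hq : 1 ≤ q) (hE : Fintype.card E ≠ 0)
include hp0 hp1 hq hE

lemma chain_of_kernel {P : Finset E → Finset E → ℝ} {k : E → Finset E → Finset E → ℝ}
    (hPk : ∀ A B, P A B = (Fintype.card E : ℝ)⁻¹ * ∑ e, k e A B)
    (hknn : ∀ (e : E) A B, 0 ≤ k e A B)
    (hkrow : ∀ (e : E) A, (∑ B, k e A B) = 1)
    (hkrev : ∀ (e : E) A B, rcMu ends p q A * k e A B = rcMu ends p q B * k e B A)
    (hkins : ∀ (e : E) A, 0 < k e A (insert e A))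
    (hkers : ∀ (e : E) A, 0 < k e A (A.erase e))
    (hpsd : ∀ f : Finset E → ℝ, 0 ≤ RCaux.Bform (rcMu ends p q) P f) :
    RCaux.NiceChain (rcMu ends p q) P := by
  have hc : (0:ℝ) < ((Fintype.card E : ℝ))⁻¹ := by
    have : 0 < Fintype.card E := Nat.pos_of_ne_zero hE
    positivity
  have hnn : ∀ A B, 0 ≤ P A B := by
    intro A B
    rw [hPk]
    exact mul_nonneg hc.le (Finset.sum_nonneg fun e _ => hknn e A B)
  refine ⟨hnn, ?_, ?_, ?_, hpsd⟩
  · intro A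
    have h1 : ∀ B, P A B = (Fintype.card E : ℝ)⁻¹ * ∑ e, k e A B := fun B => hPk A B
    rw [Finset.sum_congr rfl fun B _ => h1 B, ← Finset.mul_sum, Finset.sum_comm]
    rw [Finset.sum_congr rfl fun e _ => hkrow e A, Finset.sum_const, Finset.card_univ,
      nsmul_eq_mul, mul_one, inv_mul_cancel₀ (by exact_mod_cast hE)]
  · intro A B
    rw [hPk, hPk]
    have h : ∀ (g : E → ℝ) (x : ℝ),
        x * ((Fintype.card E : ℝ)⁻¹ * ∑ e, g e) = (Fintype.card E : ℝ)⁻¹ * ∑ e, x * g e := by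
      intro g x
      rw [← mul_assoc, mul_comm x, mul_assoc, Finset.mul_sum]
    rw [h, h]
    congr 1
    exact Finset.sum_congr rfl fun e _ => hkrev e A B
  · refine irred_of_flips hnn ?_ ?_ ?_
    · intro A
      have h1 : ∀ B, P A B = (Fintype.card E : ℝ)⁻¹ * ∑ e, k e A B := fun B => hPk A B
      rw [Finset.sum_congr rfl fun B _ => h1 B, ← Finset.mul_sum, Finset.sum_comm]
      rw [Finset.sum_congr rfl fun e _ => hkrow e A, Finset.sum_const, Finset.card_univ,
        nsmul_eq_mul, mul_one, inv_mul_cancel₀ (by exact_mod_cast hE)]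
    · intro A e
      rw [hPk]
      refine mul_pos hc (lt_of_lt_of_le (hkins e A) ?_)
      exact Finset.single_le_sum (f := fun i => k i A (insert e A))
        (fun i _ => hknn i A _) (Finset.mem_univ e)
    · intro A e
      rw [hPk]
      refine mul_pos hc (lt_of_lt_of_le (hkers e A) ?_)
      exact Finset.single_le_sum (f := fun i => k i A (A.erase e))
        (fun i _ => hknn i A _) (Finset.mem_univ e)

lemma nice_hb : RCaux.NiceChain (rcMu ends p q) (PHBRC ends p q) := by
  refine chain_of_kernel ends hp0 hp1 hq hE (fun A B => rfl)
    (fun e A B => hbK_nonneg ends hp0 hp1 hq e A B)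
    (fun e A => hb_rowsum ends hp0 hp1 hq e A)
    (fun e A B => hbK_rev ends hp0 hp1 hq e A B)
    (fun e A => hbK_pos_insert ends hp0 hp1 hq e A)
    (fun e A => hbK_pos_erase ends hp0 hp1 hq e A)
    (fun f => Bform_hb_nonneg ends hp0 hp1 hq f)

lemma nice_sb : RCaux.NiceChain (rcMu ends p q) (PSBRC ends p q) := by
  refine chain_of_kernel ends hp0 hp1 hq hE (fun A B => rfl)
    (fun e A B => sbK_nonneg ends hp0 hp1 hq e A B)
    (fun e A => sb_rowsum ends hp0 hp1 hq e A)
    (fun e A B => sbK_rev ends hp0 hp1 hq e A B)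
    (fun e A => sbK_pos_insert ends hp0 hp1 hq e A)
    (fun e A => sbK_pos_erase ends hp0 hp1 hq e A)
    (fun f => le_trans (Bform_hb_nonneg ends hp0 hp1 hq f) (Bform_hb_le_sb ends hp0 hp1 hq f))

end Assembly

section ZeroCase

lemma isEigenvalue_zero_iff {Ω : Type*} [Fintype Ω] [Nonempty Ω] (ξ : ℝ) :
    IsEigenvalue (fun (_ _ : Ω) => (0:ℝ)) ξ ↔ ξ = 0 := by
  constructor
  · rintro ⟨f, hf0, hf⟩
    obtain ⟨z, hz⟩ := Function.ne_iff.1 hf0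
    have := hf z
    simp only [zero_mul, Finset.sum_const_zero] at this
    rcases mul_eq_zero.1 this.symm with h | h
    · exact h
    · exact absurd h hz
  · rintro rfl
    refine ⟨fun _ => 1, ?_, fun x => by simp⟩
    intro h
    have := congrFun h (Classical.arbitrary Ω)
    simp at this

lemma spectralGap_zero {Ω : Type*} [Fintype Ω] [Nonempty Ω] :
    spectralGap (fun (_ _ : Ω) => (0:ℝ)) = 1 := by
  have hS : {r : ℝ | ∃ ξ : ℝ, IsEigenvalue (fun (_ _ : Ω) => (0:ℝ)) ξ ∧ ξ ≠ 1 ∧ r = |ξ|}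
      = {0} := by
    ext r
    simp only [Set.mem_setOf_eq, Set.mem_singleton_iff, isEigenvalue_zero_iff]
    constructor
    · rintro ⟨ξ, rfl, -, rfl⟩
      exact abs_zero
    · rintro rfl
      exact ⟨0, rfl, by norm_num, abs_zero.symm⟩
  rw [spectralGap, hS, csSup_singleton, sub_zero]

end ZeroCase


/-- Comparison of heat-bath and single-bond dynamics for the
random-cluster model: `(1 − p(1 − 1/q))·λ(P̃_HB) ≤ λ(P̃_SB) ≤ λ(P̃_HB)`. -/
theorem sb_hb_rc_gap_comparison
    {V E : Type*} [Fintype V] [DecidableEq V] [Fintype E] [DecidableEq E]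
    (ends : E → V × V) (p : ℝ) (hp : p ∈ Set.Ioo (0 : ℝ) 1) (q : ℝ) (hq : 1 ≤ q) :
    (1 - p * (1 - 1 / q)) * spectralGap (PHBRC ends p q) ≤ spectralGap (PSBRC ends p q) ∧
      spectralGap (PSBRC ends p q) ≤ spectralGap (PHBRC ends p q) := by
  obtain ⟨hp0, hp1⟩ := hp
  have hγ := RCaux3.gamma_bounds (p := p) (q := q) hp0 hp1 hq
  by_cases hE : Fintype.card E = 0
  · have hz : ((Fintype.card E : ℝ))⁻¹ = 0 := by
      rw [hE]; norm_num
    have hhb : PHBRC ends p q = fun (_ _ : Finset E) => (0:ℝ) := by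
      funext A B
      rw [PHBRC, hz, zero_mul]
    have hsb : PSBRC ends p q = fun (_ _ : Finset E) => (0:ℝ) := by
      funext A B
      rw [PSBRC, hz, zero_mul]
    rw [hhb, hsb, spectralGap_zero]
    constructor
    · nlinarith [hγ.1, hγ.2]
    · exact le_refl 1
  · exact RCaux.gap_comparison (RCaux3.rcMu_pos ends hp0 hp1 hq)
      (nice_hb ends hp0 hp1 hq hE) (nice_sb ends hp0 hp1 hq hE) hγ.1 hγ.2
      (RCaux3.Bform_hb_le_sb ends hp0 hp1 hq)
      (RCaux3.Bform_sb_le ends hp0 hp1 hq hE)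
end
end

section
/- Let G = (V,E) be a finite graph, q ≥ 1 an integer, β ≥ 0, and let G₀ = (V,E₀) be a spanning subgraph of G with E₀ ⊆ E. Write P_G and P_{G₀} for the transition matrices of the Swendsen–Wang dynamics for the q-state Potts model at inverse temperature β on G and on G₀, respectively. Then for all σ, τ ∈ Ω_P: e^{−β|E∖E₀|} · P_{G₀}(σ,τ) ≤ P_G(σ,τ) ≤ (1 + q(e^β − 1))^{|E∖E₀|} · P_{G₀}(σ,τ). -/
open Finset

noncomputable section

variable {V E : Type*}

section SWHelpers

open SimpleGraph

variable {V E : Type*}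

private lemma sw_sum_pow_card {α : Type*} [DecidableEq α] (s : Finset α) (x : ℝ) :
    ∑ A ∈ s.powerset, x ^ A.card = (1 + x) ^ s.card := by
  induction s using Finset.induction with
  | empty => simp
  | @insert a s ha ih =>
    rw [Finset.sum_powerset_insert ha, Finset.card_insert_of_notMem ha, pow_succ]
    have : ∀ t ∈ s.powerset, x ^ (insert a t).card = x * x ^ t.card := by
      intro t ht
      rw [Finset.card_insert_of_notMem (fun h => ha (Finset.mem_powerset.1 ht h)), pow_succ]
      ring
    rw [Finset.sum_congr rfl this, ← Finset.mul_sum, ih]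
    ring

private lemma sw_subGraph_mono (ends : E → V × V) {A B : Finset E} (h : A ⊆ B) :
    subGraph ends A ≤ subGraph ends B := by
  intro a b hab
  simp only [subGraph, SimpleGraph.fromRel_adj] at hab ⊢
  obtain ⟨hne, h2⟩ := hab
  refine ⟨hne, ?_⟩
  rcases h2 with ⟨e, he, h3⟩ | ⟨e, he, h3⟩
  · exact Or.inl ⟨e, h he, h3⟩
  · exact Or.inr ⟨e, h he, h3⟩

private lemma sw_subGraph_subtype (ends : E → V × V) (E₀ : Finset E)
    (A : Finset {e : E // e ∈ E₀}) :
    subGraph (fun e : {e : E // e ∈ E₀} => ends e.val) A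
      = subGraph ends (A.map (Function.Embedding.subtype _)) := by
  ext a b
  simp only [subGraph, SimpleGraph.fromRel_adj, Finset.mem_map,
    Function.Embedding.coe_subtype]
  aesop

private lemma sw_reach_insert [DecidableEq E] (ends : E → V × V) (A : Finset E) (e : E) {u v : V}
    (h : (subGraph ends (insert e A)).Reachable u v) :
    (subGraph ends A).Reachable u v ∨
      ((subGraph ends A).Reachable u (ends e).1 ∧
        (subGraph ends A).Reachable (ends e).2 v) ∨
      ((subGraph ends A).Reachable u (ends e).2 ∧
        (subGraph ends A).Reachable (ends e).1 v) := by
  obtain ⟨w⟩ := h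
  induction w with
  | nil => exact Or.inl (SimpleGraph.Reachable.refl _)
  | @cons x y z hxy w ih =>
    have hstep : (subGraph ends A).Adj x y ∨
        (x = (ends e).1 ∧ y = (ends e).2) ∨ (x = (ends e).2 ∧ y = (ends e).1) := by
      simp only [subGraph, SimpleGraph.fromRel_adj, Finset.mem_insert] at hxy ⊢
      obtain ⟨hne, h2⟩ := hxy
      rcases h2 with ⟨f, hf, h3⟩ | ⟨f, hf, h3⟩ <;> rcases hf with rfl | hf
      · rcases h3 with h3 | h3
        · exact Or.inr (Or.inl ⟨by rw [h3], by rw [h3]⟩)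
        · exact Or.inr (Or.inr ⟨by rw [h3], by rw [h3]⟩)
      · exact Or.inl ⟨hne, Or.inl ⟨f, hf, h3⟩⟩
      · rcases h3 with h3 | h3
        · exact Or.inr (Or.inr ⟨by rw [h3], by rw [h3]⟩)
        · exact Or.inr (Or.inl ⟨by rw [h3], by rw [h3]⟩)
      · exact Or.inl ⟨hne, Or.inr ⟨f, hf, h3⟩⟩
    rcases hstep with hadj | ⟨rfl, rfl⟩ | ⟨rfl, rfl⟩
    · rcases ih with h1 | ⟨h1, h2⟩ | ⟨h1, h2⟩
      · exact Or.inl (hadj.reachable.trans h1)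
      · exact Or.inr (Or.inl ⟨hadj.reachable.trans h1, h2⟩)
      · exact Or.inr (Or.inr ⟨hadj.reachable.trans h1, h2⟩)
    · rcases ih with h1 | ⟨h1, h2⟩ | ⟨h1, h2⟩
      · exact Or.inr (Or.inl ⟨SimpleGraph.Reachable.refl _, h1⟩)
      · exact Or.inr (Or.inl ⟨SimpleGraph.Reachable.refl _, h2⟩)
      · exact Or.inl h2
    · rcases ih with h1 | ⟨h1, h2⟩ | ⟨h1, h2⟩
      · exact Or.inr (Or.inr ⟨SimpleGraph.Reachable.refl _, h1⟩)
      · exact Or.inl h2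
      · exact Or.inr (Or.inr ⟨SimpleGraph.Reachable.refl _, h2⟩)

private lemma sw_compCount_insert [Fintype V] [DecidableEq E] (ends : E → V × V)
    (A : Finset E) (e : E) :
    compCount ends A ≤ compCount ends (insert e A) + 1 := by
  classical
  set G := subGraph ends A with hG
  set G' := subGraph ends (insert e A) with hG'
  have hle : G ≤ G' := sw_subGraph_mono ends (Finset.subset_insert e A)
  set b := (ends e).2
  set φ : G.ConnectedComponent → G'.ConnectedComponent :=
    SimpleGraph.ConnectedComponent.map (SimpleGraph.Hom.ofLE hle) with hφ
  have hφmk : ∀ v : V, φ (G.connectedComponentMk v) = G'.connectedComponentMk v := fun v => rfl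
  have key : ∀ x y : G.ConnectedComponent, φ x = φ y → x = y ∨
      x = G.connectedComponentMk b ∨ y = G.connectedComponentMk b := by
    intro x y
    refine SimpleGraph.ConnectedComponent.ind₂ (fun u v h => ?_) x y
    rw [hφmk, hφmk, SimpleGraph.ConnectedComponent.eq] at h
    rcases sw_reach_insert ends A e h with h1 | ⟨h1, h2⟩ | ⟨h1, h2⟩
    · exact Or.inl (SimpleGraph.ConnectedComponent.sound h1)
    · exact Or.inr (Or.inr (SimpleGraph.ConnectedComponent.sound h2.symm))
    · exact Or.inr (Or.inl (SimpleGraph.ConnectedComponent.sound h1))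
  set f : G.ConnectedComponent → G'.ConnectedComponent ⊕ Unit := fun x =>
    if x = G.connectedComponentMk b then Sum.inr () else Sum.inl (φ x) with hf
  have hinj : Function.Injective f := by
    intro x y hxy
    by_cases hx : x = G.connectedComponentMk b <;>
      by_cases hy : y = G.connectedComponentMk b <;>
        simp only [hf, hx, hy, if_pos, if_neg, if_true, reduceIte] at hxy
    · rw [hx, hy]
    · simp at hxy
    · simp at hxy
    · rcases key x y (by simpa using hxy) with h | h | h
      · exact h
      · exact absurd h hx
      · exact absurd h hy
  have := Nat.card_le_card_of_injective f hinj
  simpa [compCount, Nat.card_sum] using this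

private lemma sw_compCount_union [Fintype V] [DecidableEq E] (ends : E → V × V)
    (A : Finset E) (B : Finset E) :
    compCount ends A ≤ compCount ends (A ∪ B) + B.card := by
  classical
  induction B using Finset.induction with
  | empty => simp
  | @insert e B he ih =>
    have h1 : A ∪ insert e B = insert e (A ∪ B) := Finset.union_insert ..
    rw [h1, Finset.card_insert_of_notMem he]
    have := sw_compCount_insert ends (A ∪ B) e
    omega

private lemma sw_filter_subtype_map [DecidableEq E] (E₀ : Finset E) (P : E → Prop)
    [DecidablePred P] :
    ((Finset.univ : Finset {e : E // e ∈ E₀}).filter (fun e => P e.val)).map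
      (Function.Embedding.subtype (· ∈ E₀)) = E₀.filter P := by
  ext e
  simp only [Finset.mem_map, Finset.mem_filter, Finset.mem_univ, true_and,
    Function.Embedding.coe_subtype]
  aesop

end SWHelpers

/-- Comparison of the Swendsen–Wang transition probabilities on
`G = (V,E)` and on a spanning subgraph `G₀ = (V,E₀)`:
`e^{−β|E∖E₀|}·P_{G₀}(σ,τ) ≤ P_G(σ,τ) ≤ (1 + q(e^β − 1))^{|E∖E₀|}·P_{G₀}(σ,τ)`. -/
theorem sw_subgraph_comparison
    {V E : Type*} [Fintype V] [DecidableEq V] [Fintype E] [DecidableEq E]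
    (ends : E → V × V) (q : ℕ) (hq : 1 ≤ q) (β : ℝ) (hβ : 0 ≤ β)
    (E₀ : Finset E) (σ τ : V → Fin q) :
    (Real.exp (-β)) ^ (E₀ᶜ.card) *
        PSW (fun e : {e : E // e ∈ E₀} => ends e.val) q β σ τ ≤ PSW ends q β σ τ ∧
      PSW ends q β σ τ ≤
        (1 + (q : ℝ) * (Real.exp β - 1)) ^ (E₀ᶜ.card) *
          PSW (fun e : {e : E // e ∈ E₀} => ends e.val) q β σ τ := by
  classical
  have hexp_pos : 0 < Real.exp (-β) := Real.exp_pos _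
  have hexp_le : Real.exp (-β) ≤ 1 := by
    rw [← Real.exp_zero]; exact Real.exp_le_exp.2 (by linarith)
  have hp0 : (0:ℝ) ≤ 1 - Real.exp (-β) := by linarith
  have hq1 : (1:ℝ) ≤ (q:ℝ) := by exact_mod_cast hq
  have hq0 : (0:ℝ) < (q:ℝ) := by linarith
  have hterm : ∀ a b c : ℕ,
      0 ≤ (1 - Real.exp (-β)) ^ a * Real.exp (-β) ^ b * ((q:ℝ) ^ c)⁻¹ := fun a b c =>
    mul_nonneg (mul_nonneg (pow_nonneg hp0 _) (pow_nonneg hexp_pos.le _))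
      (inv_nonneg.2 (pow_nonneg hq0.le _))
  set ends' : {e : E // e ∈ E₀} → V × V := fun e => ends e.val with hends'
  have hmapσ : (agreeSet ends' σ).map (Function.Embedding.subtype (· ∈ E₀))
      = agreeSet ends σ ∩ E₀ := by
    ext e
    simp only [agreeSet, Finset.mem_map, Finset.mem_filter, Finset.mem_univ, true_and,
      Finset.mem_inter, Function.Embedding.coe_subtype, hends']
    constructor
    · rintro ⟨x, hx, rfl⟩
      exact ⟨hx, x.2⟩
    · rintro ⟨h1, h2⟩
      exact ⟨⟨e, h2⟩, h1, rfl⟩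
  have hmapτ : (agreeSet ends' τ).map (Function.Embedding.subtype (· ∈ E₀))
      = agreeSet ends τ ∩ E₀ := by
    ext e
    simp only [agreeSet, Finset.mem_map, Finset.mem_filter, Finset.mem_univ, true_and,
      Finset.mem_inter, Function.Embedding.coe_subtype, hends']
    constructor
    · rintro ⟨x, hx, rfl⟩
      exact ⟨hx, x.2⟩
    · rintro ⟨h1, h2⟩
      exact ⟨⟨e, h2⟩, h1, rfl⟩
  have hmapS : (agreeSet ends' σ ∩ agreeSet ends' τ).map (Function.Embedding.subtype (· ∈ E₀))
      = (agreeSet ends σ ∩ agreeSet ends τ) ∩ E₀ := by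
    rw [Finset.map_inter, hmapσ, hmapτ]
    ext e; simp only [Finset.mem_inter]; tauto
  have hm₀ : (agreeSet ends' σ).card = (agreeSet ends σ ∩ E₀).card := by
    rw [← hmapσ, Finset.card_map]
  have hcomp : ∀ A : Finset {e : E // e ∈ E₀},
      compCount ends' A = compCount ends (A.map (Function.Embedding.subtype (· ∈ E₀))) :=
    fun A => by rw [compCount, compCount, sw_subGraph_subtype]
  have key0 : PSW ends' q β σ τ
      = ∑ A ∈ ((agreeSet ends σ ∩ agreeSet ends τ) ∩ E₀).powerset,
        (1 - Real.exp (-β)) ^ A.card *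
          Real.exp (-β) ^ ((agreeSet ends σ ∩ E₀).card - A.card) *
          ((q:ℝ) ^ compCount ends A)⁻¹ := by
    rw [PSW]
    refine Finset.sum_nbij' (i := fun A => A.map (Function.Embedding.subtype (· ∈ E₀)))
      (j := fun A => A.subtype (· ∈ E₀)) ?_ ?_ ?_ ?_ ?_
    · intro A hA
      rw [Finset.mem_powerset] at hA ⊢
      rw [← hmapS]
      exact Finset.map_subset_map.2 hA
    · intro A hA
      rw [Finset.mem_powerset] at hA ⊢
      intro e' he'
      rw [Finset.mem_subtype] at he'
      have h1 : (e' : E) ∈ (agreeSet ends' σ ∩ agreeSet ends' τ).map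
          (Function.Embedding.subtype (· ∈ E₀)) := by rw [hmapS]; exact hA he'
      rw [Finset.mem_map] at h1
      obtain ⟨x, hx, hxe⟩ := h1
      have hxx : x = e' := Subtype.ext hxe
      rwa [← hxx]
    · intro A _
      ext e'
      simp only [Finset.mem_subtype, Finset.mem_map, Function.Embedding.coe_subtype]
      constructor
      · rintro ⟨x, hx, hxe⟩
        rwa [← Subtype.ext hxe]
      · intro h
        exact ⟨e', h, rfl⟩
    · intro A hA
      rw [Finset.mem_powerset] at hA
      ext e
      simp only [Finset.mem_map, Finset.mem_subtype, Function.Embedding.coe_subtype]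
      constructor
      · rintro ⟨x, hx, rfl⟩
        exact hx
      · intro he
        exact ⟨⟨e, (Finset.mem_inter.1 (hA he)).2⟩, he, rfl⟩
    · intro A _
      rw [Finset.card_map, hm₀, hcomp]
  have hPSW'nonneg : 0 ≤ PSW ends' q β σ τ := by
    rw [key0]; exact Finset.sum_nonneg fun A _ => hterm _ _ _
  have hm_le : (agreeSet ends σ).card ≤ (agreeSet ends σ ∩ E₀).card + E₀ᶜ.card := by
    have h1 : agreeSet ends σ ⊆ (agreeSet ends σ ∩ E₀) ∪ E₀ᶜ := by
      intro e he
      by_cases h : e ∈ E₀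
      · exact Finset.mem_union_left _ (Finset.mem_inter.2 ⟨he, h⟩)
      · exact Finset.mem_union_right _ (Finset.mem_compl.2 h)
    exact le_trans (Finset.card_le_card h1) (Finset.card_union_le _ _)
  constructor
  · -- lower bound
    rw [key0, Finset.mul_sum]
    rw [PSW]
    refine le_trans (Finset.sum_le_sum ?_)
      (Finset.sum_le_sum_of_subset_of_nonneg
        (Finset.powerset_mono.2 Finset.inter_subset_left) (fun A _ _ => hterm _ _ _))
    intro A hA
    rw [Finset.mem_powerset] at hA
    have hAcard : A.card ≤ (agreeSet ends σ ∩ E₀).card := by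
      refine Finset.card_le_card (fun e he => ?_)
      have h := Finset.mem_inter.1 (hA he)
      exact Finset.mem_inter.2 ⟨(Finset.mem_inter.1 h.1).1, h.2⟩
    have hee : Real.exp (-β) ^ E₀ᶜ.card *
        ((1 - Real.exp (-β)) ^ A.card *
          Real.exp (-β) ^ ((agreeSet ends σ ∩ E₀).card - A.card) *
          ((q:ℝ) ^ compCount ends A)⁻¹)
        = (1 - Real.exp (-β)) ^ A.card *
            Real.exp (-β) ^ (E₀ᶜ.card + ((agreeSet ends σ ∩ E₀).card - A.card)) *
            ((q:ℝ) ^ compCount ends A)⁻¹ := by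
      rw [pow_add]; ring
    rw [hee]
    refine mul_le_mul_of_nonneg_right
      (mul_le_mul_of_nonneg_left
        (pow_le_pow_of_le_one hexp_pos.le hexp_le (by omega))
        (pow_nonneg hp0 _))
      (inv_nonneg.2 (pow_nonneg hq0.le _))
  · -- upper bound
    have step1 : PSW ends q β σ τ
        ≤ ∑ A ∈ (agreeSet ends σ ∩ agreeSet ends τ).powerset,
          ((1 - Real.exp (-β)) ^ (A ∩ E₀).card *
            Real.exp (-β) ^ ((agreeSet ends σ ∩ E₀).card - (A ∩ E₀).card) *
            ((q:ℝ) ^ compCount ends (A ∩ E₀))⁻¹)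
          * ((1 - Real.exp (-β)) * q) ^ (A \ E₀).card := by
      rw [PSW]
      refine Finset.sum_le_sum (fun A hA => ?_)
      rw [Finset.mem_powerset] at hA
      have hcard : (A ∩ E₀).card + (A \ E₀).card = A.card :=
        Finset.card_inter_add_card_sdiff _ _
      have hmsplit : (agreeSet ends σ ∩ E₀).card + (agreeSet ends σ \ E₀).card
          = (agreeSet ends σ).card := Finset.card_inter_add_card_sdiff _ _
      have hAσ : A ⊆ agreeSet ends σ := fun e he => (Finset.mem_inter.1 (hA he)).1
      have ha1 : (A \ E₀).card ≤ (agreeSet ends σ \ E₀).card :=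
        Finset.card_le_card (Finset.sdiff_subset_sdiff hAσ Finset.Subset.rfl)
      have ha0 : (A ∩ E₀).card ≤ (agreeSet ends σ ∩ E₀).card :=
        Finset.card_le_card (Finset.inter_subset_inter hAσ Finset.Subset.rfl)
      have hunion : (A ∩ E₀) ∪ (A \ E₀) = A := by
        ext e
        simp only [Finset.mem_union, Finset.mem_inter, Finset.mem_sdiff]
        tauto
      have hcu : compCount ends (A ∩ E₀) ≤ compCount ends A + (A \ E₀).card := by
        have h := sw_compCount_union ends (A ∩ E₀) (A \ E₀)
        rwa [hunion] at h
      have hqb : ((q:ℝ) ^ compCount ends A)⁻¹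
          ≤ (q:ℝ) ^ (A \ E₀).card * ((q:ℝ) ^ compCount ends (A ∩ E₀))⁻¹ := by
        rw [inv_eq_one_div, ← div_eq_mul_inv,
          div_le_div_iff₀ (pow_pos hq0 _) (pow_pos hq0 _), one_mul, ← pow_add]
        exact pow_le_pow_right₀ hq1 (by omega)
      have heb : Real.exp (-β) ^ ((agreeSet ends σ).card - A.card)
          ≤ Real.exp (-β) ^ ((agreeSet ends σ ∩ E₀).card - (A ∩ E₀).card) :=
        pow_le_pow_of_le_one hexp_pos.le hexp_le (by omega)
      have hps : (1 - Real.exp (-β)) ^ A.card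
          = (1 - Real.exp (-β)) ^ (A ∩ E₀).card * (1 - Real.exp (-β)) ^ (A \ E₀).card := by
        rw [← pow_add, hcard]
      calc (1 - Real.exp (-β)) ^ A.card *
            Real.exp (-β) ^ ((agreeSet ends σ).card - A.card) *
            ((q:ℝ) ^ compCount ends A)⁻¹
          = ((1 - Real.exp (-β)) ^ (A ∩ E₀).card * (1 - Real.exp (-β)) ^ (A \ E₀).card) *
            Real.exp (-β) ^ ((agreeSet ends σ).card - A.card) *
            ((q:ℝ) ^ compCount ends A)⁻¹ := by rw [hps]
        _ ≤ ((1 - Real.exp (-β)) ^ (A ∩ E₀).card * (1 - Real.exp (-β)) ^ (A \ E₀).card) *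
            Real.exp (-β) ^ ((agreeSet ends σ ∩ E₀).card - (A ∩ E₀).card) *
            ((q:ℝ) ^ (A \ E₀).card * ((q:ℝ) ^ compCount ends (A ∩ E₀))⁻¹) := by
            refine mul_le_mul
              (mul_le_mul_of_nonneg_left heb
                (mul_nonneg (pow_nonneg hp0 _) (pow_nonneg hp0 _)))
              hqb (inv_nonneg.2 (pow_nonneg hq0.le _))
              (mul_nonneg (mul_nonneg (pow_nonneg hp0 _) (pow_nonneg hp0 _))
                (pow_nonneg hexp_pos.le _))
        _ = ((1 - Real.exp (-β)) ^ (A ∩ E₀).card *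
              Real.exp (-β) ^ ((agreeSet ends σ ∩ E₀).card - (A ∩ E₀).card) *
              ((q:ℝ) ^ compCount ends (A ∩ E₀))⁻¹)
            * ((1 - Real.exp (-β)) * q) ^ (A \ E₀).card := by
            rw [mul_pow]; ring
    have step2 : ∑ A ∈ (agreeSet ends σ ∩ agreeSet ends τ).powerset,
          ((1 - Real.exp (-β)) ^ (A ∩ E₀).card *
            Real.exp (-β) ^ ((agreeSet ends σ ∩ E₀).card - (A ∩ E₀).card) *
            ((q:ℝ) ^ compCount ends (A ∩ E₀))⁻¹)
          * ((1 - Real.exp (-β)) * q) ^ (A \ E₀).card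
        = (∑ A ∈ ((agreeSet ends σ ∩ agreeSet ends τ) ∩ E₀).powerset,
            (1 - Real.exp (-β)) ^ A.card *
              Real.exp (-β) ^ ((agreeSet ends σ ∩ E₀).card - A.card) *
              ((q:ℝ) ^ compCount ends A)⁻¹)
          * ∑ B ∈ ((agreeSet ends σ ∩ agreeSet ends τ) \ E₀).powerset,
              ((1 - Real.exp (-β)) * q) ^ B.card := by
      rw [Finset.sum_mul_sum, ← Finset.sum_product']
      refine Finset.sum_nbij' (i := fun A => (A ∩ E₀, A \ E₀))
        (j := fun z => z.1 ∪ z.2) ?_ ?_ ?_ ?_ ?_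
      · intro A hA
        rw [Finset.mem_powerset] at hA
        rw [Finset.mem_product, Finset.mem_powerset, Finset.mem_powerset]
        exact ⟨Finset.inter_subset_inter hA Finset.Subset.rfl,
          Finset.sdiff_subset_sdiff hA Finset.Subset.rfl⟩
      · intro z hz
        rw [Finset.mem_product, Finset.mem_powerset, Finset.mem_powerset] at hz
        rw [Finset.mem_powerset]
        exact Finset.union_subset (hz.1.trans Finset.inter_subset_left)
          (hz.2.trans Finset.sdiff_subset)
      · intro A _
        ext e
        simp only [Finset.mem_union, Finset.mem_inter, Finset.mem_sdiff]
        tauto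
      · intro z hz
        rw [Finset.mem_product, Finset.mem_powerset, Finset.mem_powerset] at hz
        have h1 : ∀ e ∈ z.1, e ∈ E₀ := fun e he => (Finset.mem_inter.1 (hz.1 he)).2
        have h2 : ∀ e ∈ z.2, e ∉ E₀ := fun e he => (Finset.mem_sdiff.1 (hz.2 he)).2
        have e1 : (z.1 ∪ z.2) ∩ E₀ = z.1 := by
          ext e
          simp only [Finset.mem_inter, Finset.mem_union]
          constructor
          · rintro ⟨h | h, he⟩
            · exact h
            · exact absurd he (h2 e h)
          · intro h
            exact ⟨Or.inl h, h1 e h⟩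
        have e2 : (z.1 ∪ z.2) \ E₀ = z.2 := by
          ext e
          simp only [Finset.mem_sdiff, Finset.mem_union]
          constructor
          · rintro ⟨h | h, he⟩
            · exact absurd (h1 e h) he
            · exact h
          · intro h
            exact ⟨Or.inr h, h2 e h⟩
        exact Prod.ext_iff.2 ⟨e1, e2⟩
      · intro A _
        rfl
    have hsum1 : ∑ B ∈ ((agreeSet ends σ ∩ agreeSet ends τ) \ E₀).powerset,
        ((1 - Real.exp (-β)) * q) ^ B.card
        = (1 + (1 - Real.exp (-β)) * q) ^ ((agreeSet ends σ ∩ agreeSet ends τ) \ E₀).card :=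
      sw_sum_pow_card _ _
    have hpemb : 1 - Real.exp (-β) ≤ Real.exp β - 1 := by
      have h1 : Real.exp β * Real.exp (-β) = 1 := by
        rw [← Real.exp_add]; simp
      have h2 : 1 ≤ Real.exp β := Real.one_le_exp hβ
      nlinarith [sq_nonneg (Real.exp β - 1)]
    have hone : (1:ℝ) ≤ 1 + (q:ℝ) * (Real.exp β - 1) := by
      have h2 : 1 ≤ Real.exp β := Real.one_le_exp hβ
      nlinarith
    have hbase : (0:ℝ) ≤ 1 + (1 - Real.exp (-β)) * q := by nlinarith
    have hSk : ((agreeSet ends σ ∩ agreeSet ends τ) \ E₀).card ≤ E₀ᶜ.card :=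
      Finset.card_le_card (fun e he => Finset.mem_compl.2 (Finset.mem_sdiff.1 he).2)
    have hfac : (1 + (1 - Real.exp (-β)) * q) ^ ((agreeSet ends σ ∩ agreeSet ends τ) \ E₀).card
        ≤ (1 + (q:ℝ) * (Real.exp β - 1)) ^ E₀ᶜ.card := by
      calc (1 + (1 - Real.exp (-β)) * q) ^ ((agreeSet ends σ ∩ agreeSet ends τ) \ E₀).card
          ≤ (1 + (q:ℝ) * (Real.exp β - 1))
              ^ ((agreeSet ends σ ∩ agreeSet ends τ) \ E₀).card := by
            refine pow_le_pow_left₀ hbase ?_ _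
            nlinarith
        _ ≤ (1 + (q:ℝ) * (Real.exp β - 1)) ^ E₀ᶜ.card := pow_le_pow_right₀ hone hSk
    calc PSW ends q β σ τ
        ≤ (∑ A ∈ ((agreeSet ends σ ∩ agreeSet ends τ) ∩ E₀).powerset,
            (1 - Real.exp (-β)) ^ A.card *
              Real.exp (-β) ^ ((agreeSet ends σ ∩ E₀).card - A.card) *
              ((q:ℝ) ^ compCount ends A)⁻¹)
          * ∑ B ∈ ((agreeSet ends σ ∩ agreeSet ends τ) \ E₀).powerset,
              ((1 - Real.exp (-β)) * q) ^ B.card := by rw [← step2]; exact step1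
      _ = PSW ends' q β σ τ *
          (1 + (1 - Real.exp (-β)) * q) ^ ((agreeSet ends σ ∩ agreeSet ends τ) \ E₀).card := by
          rw [← key0, hsum1]
      _ ≤ PSW ends' q β σ τ * (1 + (q:ℝ) * (Real.exp β - 1)) ^ E₀ᶜ.card :=
          mul_le_mul_of_nonneg_left hfac hPSW'nonneg
      _ = (1 + (q:ℝ) * (Real.exp β - 1)) ^ E₀ᶜ.card * PSW ends' q β σ τ := mul_comm _ _
end
end

section
/- Let G = (V,E) be a finite graph, q ≥ 1 an integer, β > 0 and p := 1 − e^{−β}. The matrices T_e, e ∈ E, pairwise commute, and the following matrix identities hold: P̃_SW = M · (∏_{e∈E} T_e) · M*, where the product over e ∈ E is taken in any fixed order, and P̃_SB = |E|⁻¹ Σ_{e∈E} M · T_e · M*. -/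
open Finset

noncomputable section

variable {V E : Type*}

/-- The matrix `M` mapping the random-cluster model to the joint
(Edwards–Sokal) model: `M(B,(σ,A)) = q^{−c(B)} 𝟙(A = B) 𝟙(B ⊆ E(σ))`. -/
def Mmat {V E : Type*} [Fintype V] [Fintype E] [DecidableEq E]
    (ends : E → V × V) (q : ℕ) :
    Matrix (Finset E) ((V → Fin q) × Finset E) ℝ :=
  Matrix.of fun B x =>
    ((q : ℝ) ^ compCount ends B)⁻¹ *
      ((if x.2 = B then 1 else 0) * (if B ⊆ agreeSet ends x.1 then 1 else 0))

/-- The adjoint matrix `M*`: `M*((σ,A),B) = 𝟙(A = B)`. -/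
def Mstar (V E : Type*) [DecidableEq E] (q : ℕ) :
    Matrix ((V → Fin q) × Finset E) (Finset E) ℝ :=
  Matrix.of fun x B => if x.2 = B then 1 else 0

/-- The single-edge update matrix `T_e` on the joint (Edwards–Sokal) model. -/
def Tmat {V E : Type*} [Fintype V] [DecidableEq E] (ends : E → V × V) (q : ℕ) (p : ℝ) (e : E) :
    Matrix ((V → Fin q) × Finset E) ((V → Fin q) × Finset E) ℝ :=
  Matrix.of fun x y =>
    (if y.1 = x.1 then 1 else 0) *
      (if x.1 (ends e).1 = x.1 (ends e).2 then
        (if y.2 = insert e x.2 then p else 0) + (if y.2 = x.2.erase e then 1 - p else 0)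
      else (if y.2 = x.2.erase e then 1 else 0))

section Aux
variable {V E : Type*}

lemma agree_iff [Fintype E] {q : ℕ} {ends : E → V × V} {σ : V → Fin q} {A : Finset E} :
    A ⊆ agreeSet ends σ ↔ ∀ a b, (subGraph ends A).Reachable a b → σ a = σ b := by
  constructor
  · intro h a b hr
    obtain ⟨w⟩ := hr
    induction w with
    | nil => rfl
    | cons hadj _ ih =>
      rw [← ih]
      clear ih
      rw [subGraph, SimpleGraph.fromRel_adj] at hadj
      obtain ⟨-, hadj | hadj⟩ := hadj <;>
      · obtain ⟨e, he, h1 | h1⟩ := hadj <;>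
        · have := h he
          simp only [agreeSet, Finset.mem_filter, h1] at this
          simp [this.2, h1]
  · intro h e he
    simp only [agreeSet, Finset.mem_filter, Finset.mem_univ, true_and]
    apply h
    by_cases hv : (ends e).1 = (ends e).2
    · rw [hv]
    · exact SimpleGraph.Adj.reachable (by
        rw [subGraph, SimpleGraph.fromRel_adj]
        exact ⟨hv, Or.inl ⟨e, he, Or.inl rfl⟩⟩)

end Aux
section Aux2
variable {V E : Type*} [Fintype V] [DecidableEq V] [Fintype E] [DecidableEq E] {q : ℕ} (ends : E → V × V) (A : Finset E)

/-- The equivalence between colorings with `A ⊆ E(σ)` and colorings of the components. -/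
noncomputable def colorEquiv :
    {σ : V → Fin q // A ⊆ agreeSet ends σ} ≃ ((subGraph ends A).ConnectedComponent → Fin q) where
  toFun x := Quot.lift x.1 (fun a b hr => agree_iff.1 x.2 a b hr)
  invFun g := ⟨fun v => g ((subGraph ends A).connectedComponentMk v), by
    intro e he
    simp only [agreeSet, Finset.mem_filter, Finset.mem_univ, true_and]
    congr 1
    apply SimpleGraph.ConnectedComponent.sound
    by_cases hv : (ends e).1 = (ends e).2
    · rw [hv]
    · exact SimpleGraph.Adj.reachable (by
        rw [subGraph, SimpleGraph.fromRel_adj]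
        exact ⟨hv, Or.inl ⟨e, he, Or.inl rfl⟩⟩)⟩
  left_inv x := rfl
  right_inv g := by
    funext c
    induction c using SimpleGraph.ConnectedComponent.ind
    rfl

lemma count_colorings :
    (Finset.univ.filter fun σ : V → Fin q => A ⊆ agreeSet ends σ).card
      = q ^ compCount ends A := by
  rw [← Fintype.card_subtype, ← Nat.card_eq_fintype_card,
    Nat.card_congr (colorEquiv ends A), Nat.card_fun, Nat.card_eq_fintype_card, Fintype.card_fin,
    compCount]

end Aux2
section Aux3

/-- Colorings with one equality constraint at two distinct points. -/
noncomputable def constrEquiv {C : Type*} [DecidableEq C] {q : ℕ} {c1 c2 : C} (hne : c1 ≠ c2) :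
    {g : C → Fin q // g c1 = g c2} ≃ ({c : C // c ≠ c2} → Fin q) where
  toFun x c := x.1 c.1
  invFun h := ⟨fun c => if hc : c = c2 then h ⟨c1, hne⟩ else h ⟨c, hc⟩, by simp [hne]⟩
  left_inv x := by
    apply Subtype.ext
    funext c
    by_cases hc : c = c2
    · subst hc; simpa using x.2
    · simp [hc]
  right_inv h := by
    funext c
    simp [c.2]

variable {V E : Type*} [Fintype V] [DecidableEq V] [Fintype E] [DecidableEq E]
  {q : ℕ} (ends : E → V × V) (A : Finset E)

lemma count_colorings_constrained (e : E) (h : ¬ connectedIn ends A e) :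
    (Finset.univ.filter fun σ : V → Fin q =>
        A ⊆ agreeSet ends σ ∧ σ (ends e).1 = σ (ends e).2).card * q
      = q ^ compCount ends A := by
  haveI := Classical.decEq (subGraph ends A).ConnectedComponent
  haveI : Nonempty V := ⟨(ends e).1⟩
  haveI : Nonempty (subGraph ends A).ConnectedComponent :=
    ⟨(subGraph ends A).connectedComponentMk (ends e).1⟩
  have hne : (subGraph ends A).connectedComponentMk (ends e).1
      ≠ (subGraph ends A).connectedComponentMk (ends e).2 := by
    intro hc
    exact h (SimpleGraph.ConnectedComponent.exact hc)
  have e1 : {σ : V → Fin q // A ⊆ agreeSet ends σ ∧ σ (ends e).1 = σ (ends e).2}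
      ≃ ({c : (subGraph ends A).ConnectedComponent //
            c ≠ (subGraph ends A).connectedComponentMk (ends e).2} → Fin q) :=
    ((Equiv.subtypeSubtypeEquivSubtypeInter _ _).symm.trans
      ((colorEquiv ends A).subtypeEquiv fun x => Iff.rfl)).trans (constrEquiv hne)
  have hC1 : 0 < Fintype.card (subGraph ends A).ConnectedComponent := Fintype.card_pos
  have hsub : Fintype.card {c : (subGraph ends A).ConnectedComponent //
        c ≠ (subGraph ends A).connectedComponentMk (ends e).2}
      = Fintype.card (subGraph ends A).ConnectedComponent - 1 := by
    have := Fintype.card_subtype_compl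
      (fun c : (subGraph ends A).ConnectedComponent =>
        c = (subGraph ends A).connectedComponentMk (ends e).2)
    rw [Fintype.card_subtype_eq] at this
    convert this using 2
  have hcard : (Finset.univ.filter fun σ : V → Fin q =>
      A ⊆ agreeSet ends σ ∧ σ (ends e).1 = σ (ends e).2).card
      = q ^ (compCount ends A - 1) := by
    rw [← Fintype.card_subtype, ← Nat.card_eq_fintype_card, Nat.card_congr e1, Nat.card_fun,
      Nat.card_eq_fintype_card, Fintype.card_fin]
    congr 1
    rw [Nat.card_eq_fintype_card, hsub, compCount, Nat.card_eq_fintype_card]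
  have hc1 : 1 ≤ compCount ends A := by
    rw [compCount, Nat.card_eq_fintype_card]; exact hC1
  rw [hcard, ← pow_succ, Nat.sub_add_cancel hc1]

end Aux3
section Aux4
variable {V E : Type*} [Fintype V] [DecidableEq V] [DecidableEq E] [Fintype E]

/-- single-edge weight factor -/
def wfac (ends : E → V × V) {q : ℕ} (p : ℝ) (σ : V → Fin q) (B : Finset E) (e : E) : ℝ :=
  if σ (ends e).1 = σ (ends e).2 then (if e ∈ B then p else 1 - p)
  else (if e ∈ B then 0 else 1)

omit [Fintype V] [DecidableEq V] [Fintype E] in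
lemma sdiff_insert_eq_erase (D : Finset E) (e : E) (lF : Finset E) :
    D \ insert e lF = (D \ lF).erase e := by
  ext a; simp only [Finset.mem_sdiff, Finset.mem_insert, Finset.mem_erase]; tauto

omit [Fintype V] [DecidableEq V] [Fintype E] in
lemma erase_sdiff_eq (D : Finset E) (e : E) (lF : Finset E) :
    (D.erase e) \ lF = (D \ lF).erase e := by
  ext a; simp only [Finset.mem_sdiff, Finset.mem_erase]; tauto

omit [Fintype V] [DecidableEq V] [Fintype E] in
lemma eq_insert_iff {D X : Finset E} {e : E} (he : e ∈ D) :
    D = insert e X ↔ D.erase e = X.erase e := by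
  constructor
  · rintro rfl; exact Finset.erase_insert_eq_erase _ _
  · intro h
    ext a
    by_cases ha : a = e
    · subst ha; simp [he]
    · have := Finset.ext_iff.1 h a
      have h2 : a ∈ D.erase e ↔ a ∈ X.erase e := by rw [h]
      simp only [Finset.mem_erase, ne_eq, ha, not_false_iff, true_and] at h2
      simp [Finset.mem_insert, ha, h2]

omit [Fintype V] [DecidableEq V] [Fintype E] in
lemma eq_erase_iff {D X : Finset E} {e : E} (he : e ∉ D) :
    D = X.erase e ↔ D.erase e = X.erase e := by
  rw [Finset.erase_eq_of_notMem he]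

lemma Tprod_apply (ends : E → V × V) (q : ℕ) (p : ℝ) :
    ∀ l : List E, l.Nodup → ∀ x y : (V → Fin q) × Finset E,
      (l.map (Tmat ends q p)).prod x y =
        (if y.1 = x.1 then 1 else 0) *
          ((if y.2 \ l.toFinset = x.2 \ l.toFinset then 1 else 0) *
            ∏ e ∈ l.toFinset, wfac ends p x.1 y.2 e) := by
  intro l
  induction l with
  | nil =>
    intro _ x y
    simp only [List.map_nil, List.prod_nil, List.toFinset_nil,
      Finset.sdiff_empty, Finset.prod_empty, mul_one]
    rw [Matrix.one_apply]
    have hxy : (x = y) = (y.1 = x.1 ∧ y.2 = x.2) := by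
      apply propext
      constructor
      · rintro rfl; exact ⟨rfl, rfl⟩
      · intro h; exact Prod.ext_iff.mpr ⟨h.1.symm, h.2.symm⟩
    simp only [hxy]
    by_cases h1 : y.1 = x.1 <;> by_cases h2 : y.2 = x.2 <;> simp [h1, h2]
  | cons e l ih =>
    intro hnd x y
    simp only [List.nodup_cons] at hnd
    have helF : e ∉ l.toFinset := by simpa using hnd.1
    have hnd' : l.Nodup := hnd.2
    simp only [List.map_cons, List.prod_cons, Matrix.mul_apply]
    rw [Fintype.sum_prod_type]
    -- only τ = x.1 contributes
    rw [Finset.sum_eq_single_of_mem x.1 (Finset.mem_univ _)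
      (fun τ _ hτ => by
        apply Finset.sum_eq_zero
        intro C _
        have : Tmat ends q p e x (τ, C) = 0 := by
          simp [Tmat, hτ]
        rw [this, zero_mul])]
    -- rewrite the remaining sum
    have hT : ∀ C : Finset E, Tmat ends q p e x (x.1, C) =
        (if x.1 (ends e).1 = x.1 (ends e).2 then
          (if C = insert e x.2 then p else 0) + (if C = x.2.erase e then 1 - p else 0)
        else (if C = x.2.erase e then 1 else 0)) := by
      intro C; simp [Tmat]
    have hIH : ∀ C : Finset E, (l.map (Tmat ends q p)).prod (x.1, C) y =
        (if y.1 = x.1 then 1 else 0) *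
          ((if y.2 \ l.toFinset = C \ l.toFinset then 1 else 0) *
            ∏ e' ∈ l.toFinset, wfac ends p x.1 y.2 e') := fun C => ih hnd' (x.1, C) y
    simp only [hT, hIH]
    rw [List.toFinset_cons, Finset.prod_insert helF]
    -- abbreviations
    set W := ∏ e' ∈ l.toFinset, wfac ends p x.1 y.2 e' with hW
    set D := y.2 \ l.toFinset with hD
    set X := x.2 \ l.toFinset with hX
    have h1 : (insert e x.2) \ l.toFinset = insert e X :=
      Finset.insert_sdiff_of_notMem _ helF
    have h2 : (x.2.erase e) \ l.toFinset = X.erase e := erase_sdiff_eq _ _ _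
    have h3 : y.2 \ insert e l.toFinset = D.erase e := sdiff_insert_eq_erase _ _ _
    have h4 : x.2 \ insert e l.toFinset = X.erase e := sdiff_insert_eq_erase _ _ _
    have heD : e ∈ D ↔ e ∈ y.2 := by
      rw [hD, Finset.mem_sdiff]; exact ⟨fun h => h.1, fun h => ⟨h, helF⟩⟩
    rw [h3, h4]
    -- reduce to a scalar identity
    have key : (∑ C : Finset E,
        (if x.1 (ends e).1 = x.1 (ends e).2 then
          (if C = insert e x.2 then p else 0) + (if C = x.2.erase e then 1 - p else 0)
        else (if C = x.2.erase e then 1 else 0)) *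
        ((if y.1 = x.1 then 1 else 0) *
          ((if D = C \ l.toFinset then 1 else 0) * W))) =
        (if x.1 (ends e).1 = x.1 (ends e).2 then
          p * ((if y.1 = x.1 then 1 else 0) * ((if D = insert e X then 1 else 0) * W)) +
          (1 - p) * ((if y.1 = x.1 then 1 else 0) * ((if D = X.erase e then 1 else 0) * W))
        else ((if y.1 = x.1 then 1 else 0) * ((if D = X.erase e then 1 else 0) * W))) := by
      by_cases hag : x.1 (ends e).1 = x.1 (ends e).2 <;>
        simp only [hag, if_true, if_false, add_mul, ite_mul, zero_mul, one_mul, mul_one,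
          mul_zero, Finset.sum_add_distrib, Finset.sum_ite_eq' Finset.univ, Finset.mem_univ,
          if_true, h1, h2]
    rw [key]
    -- now the pure scalar case analysis
    by_cases hag : x.1 (ends e).1 = x.1 (ends e).2 <;>
      by_cases hey : e ∈ y.2
    · have heD' : e ∈ D := heD.2 hey
      have hne1 : D ≠ X.erase e := fun h => Finset.notMem_erase e X (h ▸ heD')
      simp only [hag, if_true, eq_insert_iff heD', if_neg hne1, wfac, hey]
      ring
    · have heD' : e ∉ D := fun h => hey (heD.1 h)
      have hne1 : D ≠ insert e X := fun h =>
        heD' (h ▸ Finset.mem_insert_self e X)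
      simp only [hag, if_true, eq_erase_iff heD', if_neg hne1, wfac, hey, if_false]
      ring
    · have heD' : e ∈ D := heD.2 hey
      have hne1 : D ≠ X.erase e := fun h => Finset.notMem_erase e X (h ▸ heD')
      simp only [hag, if_false, if_neg hne1, wfac, hey, if_true]
      ring
    · have heD' : e ∉ D := fun h => hey (heD.1 h)
      simp only [hag, if_false, eq_erase_iff heD', wfac, hey]
      ring

end Aux4
section Aux5
variable {V E : Type*} [Fintype V] [DecidableEq V] [DecidableEq E] [Fintype E]

lemma prod_wfac (ends : E → V × V) {q : ℕ} (p : ℝ) (σ : V → Fin q) (B : Finset E) :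
    ∏ e : E, wfac ends p σ B e =
      if B ⊆ agreeSet ends σ then
        p ^ B.card * (1 - p) ^ ((agreeSet ends σ).card - B.card) else 0 := by
  by_cases h : B ⊆ agreeSet ends σ
  · rw [if_pos h, ← Finset.prod_sdiff (Finset.subset_univ (agreeSet ends σ))]
    have h1 : ∏ e ∈ Finset.univ \ agreeSet ends σ, wfac ends p σ B e = 1 := by
      apply Finset.prod_eq_one
      intro e he
      rw [Finset.mem_sdiff] at he
      have hag : ¬ σ (ends e).1 = σ (ends e).2 := by
        intro hc; exact he.2 (by simp [agreeSet, hc])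
      have heB : e ∉ B := fun hc => he.2 (h hc)
      simp [wfac, hag, heB]
    rw [h1, one_mul, ← Finset.prod_sdiff h]
    have h2 : ∏ e ∈ agreeSet ends σ \ B, wfac ends p σ B e = (1 - p) ^ ((agreeSet ends σ).card - B.card) := by
      rw [← Finset.card_sdiff_of_subset h, ← Finset.prod_const]
      apply Finset.prod_congr rfl
      intro e he
      rw [Finset.mem_sdiff] at he
      have hag : σ (ends e).1 = σ (ends e).2 := by
        have := he.1; simpa [agreeSet] using this
      simp [wfac, hag, he.2]
    have h3 : ∏ e ∈ B, wfac ends p σ B e = p ^ B.card := by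
      rw [← Finset.prod_const]
      apply Finset.prod_congr rfl
      intro e he
      have hag : σ (ends e).1 = σ (ends e).2 := by
        have := h he; simpa [agreeSet] using this
      simp [wfac, hag, he]
    rw [h2, h3]; ring
  · rw [if_neg h]
    obtain ⟨e, heB, hea⟩ := Finset.not_subset.1 h
    apply Finset.prod_eq_zero (Finset.mem_univ e)
    have hag : ¬ σ (ends e).1 = σ (ends e).2 := by
      intro hc; exact hea (by simp [agreeSet, hc])
    simp [wfac, hag, heB]

lemma MQM {q : ℕ} (ends : E → V × V)
    (Q : Matrix ((V → Fin q) × Finset E) ((V → Fin q) × Finset E) ℝ)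
    (hfun : (V → Fin q) → Finset E → Finset E → ℝ)
    (hQ : ∀ x y, Q x y = (if y.1 = x.1 then 1 else 0) * hfun x.1 x.2 y.2)
    (A B : Finset E) :
    (Mmat ends q * Q * Mstar V E q) A B =
      ∑ σ : V → Fin q, ((q : ℝ) ^ compCount ends A)⁻¹ *
        ((if A ⊆ agreeSet ends σ then 1 else 0) * hfun σ A B) := by
  simp only [Matrix.mul_apply, Mmat, Mstar, Matrix.of_apply, hQ, Fintype.sum_prod_type]
  simp only [ite_mul, mul_ite, mul_zero, zero_mul, mul_one, one_mul, Finset.sum_ite_eq,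
    Finset.sum_ite_eq', Finset.mem_univ, if_true, Finset.sum_ite_irrel, Finset.sum_const_zero]

end Aux5
/-- The matrices `T_e` pairwise commute, the Swendsen–Wang
dynamics for the random-cluster model factors as `M ⬝ (∏_e T_e) ⬝ M*` (the
product taken in any fixed order, i.e. along any enumeration of `E`), and the
single-bond dynamics factors as `|E|⁻¹ Σ_e M ⬝ T_e ⬝ M*`; here `p = 1 − e^{−β}`. -/
theorem sw_sb_joint_representation
    {V E : Type*} [Fintype V] [DecidableEq V] [Fintype E] [DecidableEq E]
    (ends : E → V × V) (q : ℕ) (hq : 1 ≤ q) (β : ℝ) (hβ : 0 < β) :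
    (∀ e e' : E,
      Tmat ends q (1 - Real.exp (-β)) e * Tmat ends q (1 - Real.exp (-β)) e' =
        Tmat ends q (1 - Real.exp (-β)) e' * Tmat ends q (1 - Real.exp (-β)) e) ∧
    (∀ l : List E, l.Nodup → (∀ e : E, e ∈ l) →
      Matrix.of (PSWRC ends (1 - Real.exp (-β)) q) =
        Mmat ends q * (l.map (Tmat ends q (1 - Real.exp (-β)))).prod * Mstar V E q) ∧
    (Matrix.of (PSBRC ends (1 - Real.exp (-β)) q) =
      (Fintype.card E : ℝ)⁻¹ •
        ∑ e : E, Mmat ends q * Tmat ends q (1 - Real.exp (-β)) e * Mstar V E q) := by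
  classical
  set p : ℝ := 1 - Real.exp (-β) with hp
  have hp0 : (1 : ℝ) - p ≠ 0 := by
    rw [hp]; ring_nf; positivity
  have hq0 : (q : ℝ) ≠ 0 := by positivity
  have hqc : ∀ A : Finset E, ((q : ℝ) ^ compCount ends A) ≠ 0 := fun A => by positivity
  refine ⟨?_, ?_, ?_⟩
  · -- commutativity
    intro e e'
    by_cases h : e = e'
    · subst h; rfl
    · have hnd : ([e, e'] : List E).Nodup := by simp [h]
      have hnd' : ([e', e] : List E).Nodup := by simp [Ne.symm h]
      have f1 : Tmat ends q p e * Tmat ends q p e' =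
          (([e, e'] : List E).map (Tmat ends q p)).prod := by simp
      have f2 : Tmat ends q p e' * Tmat ends q p e =
          (([e', e] : List E).map (Tmat ends q p)).prod := by simp
      rw [f1, f2]
      ext x y
      rw [Tprod_apply ends q p _ hnd x y, Tprod_apply ends q p _ hnd' x y]
      have htf : ([e, e'] : List E).toFinset = ([e', e] : List E).toFinset := by
        ext a; simp [or_comm]
      rw [htf]
  · -- Swendsen-Wang
    intro l hnd hcov
    have hlF : l.toFinset = Finset.univ :=
      Finset.eq_univ_iff_forall.2 fun e => List.mem_toFinset.2 (hcov e)
    ext A B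
    rw [MQM ends _ (fun σ A' B' =>
        if B' ⊆ agreeSet ends σ then
          p ^ B'.card * (1 - p) ^ ((agreeSet ends σ).card - B'.card) else 0)
      (fun x y => by
        rw [Tprod_apply ends q p l hnd x y, hlF]
        have hdu : ∀ s : Finset E, s \ (Finset.univ : Finset E) = (∅ : Finset E) := fun s =>
          Finset.sdiff_eq_empty_iff_subset.2 (Finset.subset_univ s)
        simp [hdu, prod_wfac]) A B]
    show PSWRC ends p q A B = _
    rw [PSWRC, Finset.mul_sum]
    apply Finset.sum_congr rfl
    intro σ _
    by_cases hA : A ⊆ agreeSet ends σ <;> by_cases hB : B ⊆ agreeSet ends σ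
    · have hAB : A ∪ B ⊆ agreeSet ends σ := Finset.union_subset hA hB
      rw [if_pos hAB, if_pos hA, if_pos hB, div_pow,
        pow_sub₀ _ hp0 (Finset.card_le_card hB)]
      field_simp
      try ring
    all_goals
      have hAB : ¬ A ∪ B ⊆ agreeSet ends σ := by
        rw [Finset.union_subset_iff]; tauto
      simp [hAB, hA, hB]
  · -- single-bond
    ext A B
    rw [Matrix.smul_apply, Matrix.sum_apply]
    show PSBRC ends p q A B = _
    rw [PSBRC, smul_eq_mul]
    congr 1
    apply Finset.sum_congr rfl
    intro e _
    rw [MQM ends (Tmat ends q p e) (fun σ A' B' =>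
        if σ (ends e).1 = σ (ends e).2 then
          ((if B' = insert e A' then p else 0) + (if B' = A'.erase e then 1 - p else 0))
        else (if B' = A'.erase e then 1 else 0)) (fun x y => rfl) A B]
    set aa : ℝ := (if B = insert e A then p else 0) + (if B = A.erase e then 1 - p else 0)
      with haa
    set bb : ℝ := (if B = A.erase e then (1:ℝ) else 0) with hbb
    have hsplit : ∀ σ : V → Fin q,
        ((q : ℝ) ^ compCount ends A)⁻¹ *
          ((if A ⊆ agreeSet ends σ then (1:ℝ) else 0) *
            (if σ (ends e).1 = σ (ends e).2 then aa else bb)) =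
        ((q : ℝ) ^ compCount ends A)⁻¹ *
          ((if A ⊆ agreeSet ends σ ∧ σ (ends e).1 = σ (ends e).2 then aa else 0) +
           (if A ⊆ agreeSet ends σ ∧ ¬ σ (ends e).1 = σ (ends e).2 then bb else 0)) := by
      intro σ
      by_cases h1 : A ⊆ agreeSet ends σ <;>
        by_cases h2 : σ (ends e).1 = σ (ends e).2 <;> simp [h1, h2]
    rw [Finset.sum_congr rfl fun σ _ => hsplit σ, ← Finset.mul_sum,
      Finset.sum_add_distrib, ← Finset.sum_filter, ← Finset.sum_filter,
      Finset.sum_const, Finset.sum_const, nsmul_eq_mul, nsmul_eq_mul]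
    set N1 := (Finset.univ.filter fun σ : V → Fin q =>
      A ⊆ agreeSet ends σ ∧ σ (ends e).1 = σ (ends e).2).card with hN1
    set N2 := (Finset.univ.filter fun σ : V → Fin q =>
      A ⊆ agreeSet ends σ ∧ ¬ σ (ends e).1 = σ (ends e).2).card with hN2
    clear_value N1 N2
    have hsum : N1 + N2 = q ^ compCount ends A := by
      rw [hN1, hN2, ← Finset.filter_filter, ← Finset.filter_filter,
        Finset.card_filter_add_card_filter_not, count_colorings]
    by_cases hc : connectedIn ends A e
    · rw [if_pos hc]
      have hN2z : N2 = 0 := by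
        have hemp : (Finset.univ.filter fun σ : V → Fin q =>
            A ⊆ agreeSet ends σ ∧ ¬ σ (ends e).1 = σ (ends e).2) = ∅ := by
          apply Finset.eq_empty_iff_forall_notMem.2
          intro σ hσ
          rw [Finset.mem_filter] at hσ
          exact hσ.2.2 (agree_iff.1 hσ.2.1 _ _ hc)
        rw [hN2, hemp, Finset.card_empty]
      have hN1v : N1 = q ^ compCount ends A := by
        rw [hN2z, Nat.add_zero] at hsum; exact hsum
      rw [hN1v, hN2z]
      push_cast
      rw [haa]
      field_simp
      ring
    · rw [if_neg hc]
      have hN1q : N1 * q = q ^ compCount ends A := by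
        rw [hN1]; exact count_colorings_constrained ends A e hc
      have e1 : (N1 : ℝ) = (q : ℝ) ^ compCount ends A / q := by
        have : ((N1 * q : ℕ) : ℝ) = ((q ^ compCount ends A : ℕ) : ℝ) := by rw [hN1q]
        push_cast at this
        field_simp
        linarith [this]
      have e2 : (N2 : ℝ) = (q : ℝ) ^ compCount ends A - (q : ℝ) ^ compCount ends A / q := by
        have : ((N1 + N2 : ℕ) : ℝ) = ((q ^ compCount ends A : ℕ) : ℝ) := by rw [hsum]
        push_cast at this
        rw [← e1]; linarith [this]
      rw [e1, e2, haa, hbb]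
      have hQC := hqc A
      have hne2 : ¬ (insert e A = A.erase e) := fun hch =>
        Finset.notMem_erase e A (hch ▸ Finset.mem_insert_self e A)
      have hne2' : ¬ (A.erase e = insert e A) := fun h => hne2 h.symm
      by_cases hi : B = insert e A <;> by_cases her : B = A.erase e
      · exact absurd (hi.symm.trans her) hne2
      · simp only [hi, hne2, eq_self_iff_true, if_true, if_false]
        field_simp
        try ring
      · simp only [her, hne2', eq_self_iff_true, if_true, if_false]
        field_simp
        try ring
      · simp only [hi, her, if_false]
        field_simp
        ring
end
end

section
/- Let H₁ and H₂ be Hilbert spaces, R : H₂ → H₁ a bounded linear operator with adjoint R*, and T : H₂ → H₂ a bounded self-adjoint positive operator (⟨Tg, g⟩ ≥ 0 for all g ∈ H₂). Then for every k ∈ ℕ, ‖R T^{k+1} R*‖ ≤ ‖T‖ · ‖R T^k R*‖, where ‖·‖ denotes the operator norm. -/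
open ContinuousLinearMap

section Aux

variable {H : Type*} [NormedAddCommGroup H] [InnerProductSpace ℝ H] [CompleteSpace H]

/-- For a self-adjoint operator `A`, a bound on the quadratic form gives a bound on the
operator norm. -/
lemma aux_norm_le_of_inner (A : H →L[ℝ] H) (hA : IsSelfAdjoint A) {c : ℝ} (hc : 0 ≤ c)
    (h : ∀ x : H, |(inner ℝ (A x) x : ℝ)| ≤ c * ‖x‖ ^ 2) : ‖A‖ ≤ c := by
  have hsymm := (isSelfAdjoint_iff_isSymmetric).mp hA
  have hb : ∀ x y : H, (inner ℝ (A x) y : ℝ) ≤ c / 2 * (‖x‖ ^ 2 + ‖y‖ ^ 2) := by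
    intro x y
    have h1 := h (x + y)
    have h2 := h (x - y)
    have hyx : (inner ℝ (A y) x : ℝ) = inner ℝ (A x) y :=
      ((hsymm x y).trans (real_inner_comm (A y) x)).symm
    have key : (4 : ℝ) * inner ℝ (A x) y =
        inner ℝ (A (x + y)) (x + y) - inner ℝ (A (x - y)) (x - y) := by
      simp only [map_add, map_sub, inner_add_left, inner_add_right, inner_sub_left,
        inner_sub_right, hyx]
      ring
    have hpar : ‖x + y‖ ^ 2 + ‖x - y‖ ^ 2 = 2 * ‖x‖ ^ 2 + 2 * ‖y‖ ^ 2 := by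
      have e1 := @norm_add_sq_real H _ _ x y
      have e2 := @norm_sub_sq_real H _ _ x y
      linarith
    have h1' := (abs_le.mp h1).2
    have h2' := (abs_le.mp h2).1
    nlinarith
  refine A.opNorm_le_bound hc fun x => ?_
  rcases eq_or_ne (A x) 0 with hAx | hAx
  · simp [hAx, mul_nonneg hc (norm_nonneg x)]
  · have hAxpos : (0 : ℝ) < ‖A x‖ := norm_pos_iff.mpr hAx
    set y : H := (‖x‖ / ‖A x‖) • A x with hy
    have hny : ‖y‖ = ‖x‖ := by
      rw [hy, norm_smul, Real.norm_eq_abs, abs_of_nonneg (by positivity)]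
      field_simp
    have hin : (inner ℝ (A x) y : ℝ) = ‖x‖ * ‖A x‖ := by
      rw [hy, real_inner_smul_right, real_inner_self_eq_norm_sq]
      field_simp
    have := hb x y
    rw [hin, hny] at this
    rcases eq_or_ne x 0 with hx | hx
    · exact absurd (by simp [hx] : A x = 0) hAx
    · have hxpos : (0 : ℝ) < ‖x‖ := norm_pos_iff.mpr hx
      nlinarith

/-- Key inequality for positive operators: `‖T h‖² ≤ ‖T‖ ⟨T h, h⟩`. -/
lemma aux_key (T : H →L[ℝ] H) (hT : IsSelfAdjoint T)
    (hTpos : ∀ g : H, 0 ≤ (inner ℝ (T g) g : ℝ)) (h : H) :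
    ‖T h‖ ^ 2 ≤ ‖T‖ * inner ℝ (T h) h := by
  have hsymm := (isSelfAdjoint_iff_isSymmetric).mp hT
  rcases eq_or_ne T 0 with hT0 | hT0
  · simp [hT0]
  · have hN : (0 : ℝ) < ‖T‖ := norm_pos_iff.mpr hT0
    have hexp := hTpos (h - ‖T‖⁻¹ • T h)
    have hTTh : (inner ℝ (T (T h)) h : ℝ) = inner ℝ (T h) (T h) := hsymm (T h) h
    simp only [map_sub, map_smul, inner_sub_left, inner_sub_right, real_inner_smul_left,
      real_inner_smul_right, smul_sub] at hexp
    have hCS : (inner ℝ (T (T h)) (T h) : ℝ) ≤ ‖T‖ * ‖T h‖ ^ 2 := by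
      calc (inner ℝ (T (T h)) (T h) : ℝ) ≤ ‖T (T h)‖ * ‖T h‖ := real_inner_le_norm _ _
        _ ≤ (‖T‖ * ‖T h‖) * ‖T h‖ :=
          mul_le_mul_of_nonneg_right (T.le_opNorm (T h)) (norm_nonneg _)
        _ = ‖T‖ * ‖T h‖ ^ 2 := by ring
    have hsq : (inner ℝ (T h) (T h) : ℝ) = ‖T h‖ ^ 2 := real_inner_self_eq_norm_sq _
    have hNinv : ‖T‖⁻¹ * ‖T‖ = 1 := inv_mul_cancel₀ hN.ne'
    rw [hTTh, hsq] at hexp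
    have htc : ‖T‖⁻¹ * inner ℝ (T (T h)) (T h) ≤ ‖T h‖ ^ 2 := by
      have h1 : ‖T‖⁻¹ * (inner ℝ (T (T h)) (T h) : ℝ) ≤ ‖T‖⁻¹ * (‖T‖ * ‖T h‖ ^ 2) :=
        mul_le_mul_of_nonneg_left hCS (inv_nonneg.mpr hN.le)
      have h2 : ‖T‖⁻¹ * (‖T‖ * ‖T h‖ ^ 2) = ‖T h‖ ^ 2 := by field_simp
      linarith [h1.trans_eq h2]
    have h4 : ‖T‖⁻¹ * (‖T‖⁻¹ * inner ℝ (T (T h)) (T h)) ≤ ‖T‖⁻¹ * ‖T h‖ ^ 2 :=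
      mul_le_mul_of_nonneg_left htc (inv_nonneg.mpr hN.le)
    have h3 : ‖T‖⁻¹ * ‖T h‖ ^ 2 ≤ (inner ℝ (T h) h : ℝ) := by linarith
    have h5 : ‖T‖ * (‖T‖⁻¹ * ‖T h‖ ^ 2) ≤ ‖T‖ * inner ℝ (T h) h :=
      mul_le_mul_of_nonneg_left h3 hN.le
    have h6 : ‖T‖ * (‖T‖⁻¹ * ‖T h‖ ^ 2) = ‖T h‖ ^ 2 := by field_simp
    linarith [h5, h6]

/-- Pointwise positivity of powers of a positive operator. -/
lemma aux_pow_pos (T : H →L[ℝ] H) (hT : IsSelfAdjoint T)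
    (hTpos : ∀ g : H, 0 ≤ (inner ℝ (T g) g : ℝ)) (n : ℕ) (g : H) :
    0 ≤ (inner ℝ ((T ^ n) g) g : ℝ) := by
  have hsymm : ∀ m : ℕ, ∀ u v : H, (inner ℝ ((T ^ m) u) v : ℝ) = inner ℝ u ((T ^ m) v) :=
    fun m => (isSelfAdjoint_iff_isSymmetric).mp (hT.pow m)
  rcases Nat.even_or_odd n with ⟨m, hm⟩ | ⟨m, hm⟩
  · subst hm
    have e : (T ^ (m + m)) g = (T ^ m) ((T ^ m) g) := by
      rw [pow_add]; rfl
    rw [e, hsymm m]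
    exact real_inner_self_nonneg
  · subst hm
    have e : (T ^ (2 * m + 1)) g = (T ^ m) (T ((T ^ m) g)) := by
      have : 2 * m + 1 = m + 1 + m := by ring
      rw [this, pow_add, pow_succ]; rfl
    rw [e, hsymm m]
    exact hTpos _

/-- Key step: `⟨T^{k+1} g, g⟩ ≤ ‖T‖ ⟨T^k g, g⟩`. -/
lemma aux_step (T : H →L[ℝ] H) (hT : IsSelfAdjoint T)
    (hTpos : ∀ g : H, 0 ≤ (inner ℝ (T g) g : ℝ)) (k : ℕ) (g : H) :
    (inner ℝ ((T ^ (k + 1)) g) g : ℝ) ≤ ‖T‖ * inner ℝ ((T ^ k) g) g := by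
  have hsymm : ∀ m : ℕ, ∀ u v : H, (inner ℝ ((T ^ m) u) v : ℝ) = inner ℝ u ((T ^ m) v) :=
    fun m => (isSelfAdjoint_iff_isSymmetric).mp (hT.pow m)
  rcases Nat.even_or_odd k with ⟨m, hm⟩ | ⟨m, hm⟩
  · -- k = m + m, so ⟨T^{k+1} g, g⟩ = ⟨T h, h⟩ with h = T^m g
    subst hm
    set h := (T ^ m) g with hh
    have e1 : (T ^ (m + m + 1)) g = (T ^ m) (T h) := by
      have : m + m + 1 = m + 1 + m := by ring
      rw [this, pow_add, pow_succ]; rfl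
    have e2 : (T ^ (m + m)) g = (T ^ m) h := by
      rw [pow_add]; rfl
    rw [e1, e2, hsymm m, hsymm m]
    have hTh : (inner ℝ (T h) h : ℝ) ≤ ‖T‖ * inner ℝ h h := by
      calc (inner ℝ (T h) h : ℝ) ≤ ‖T h‖ * ‖h‖ := real_inner_le_norm _ _
        _ ≤ (‖T‖ * ‖h‖) * ‖h‖ :=
          mul_le_mul_of_nonneg_right (T.le_opNorm h) (norm_nonneg _)
        _ = ‖T‖ * inner ℝ h h := by
          rw [real_inner_self_eq_norm_sq]; ring
    exact hTh
  · -- k = 2m+1, so ⟨T^{k+1} g, g⟩ = ‖T h‖² with h = T^m g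
    subst hm
    set h := (T ^ m) g with hh
    have e1 : (T ^ (2 * m + 1 + 1)) g = (T ^ (m + 1)) ((T ^ (m + 1)) g) := by
      have : 2 * m + 1 + 1 = (m + 1) + (m + 1) := by ring
      rw [this, pow_add]; rfl
    have e2 : (T ^ (m + 1)) g = T h := by
      rw [pow_succ']; rfl
    have e3 : (T ^ (2 * m + 1)) g = (T ^ m) (T h) := by
      have : 2 * m + 1 = m + 1 + m := by ring
      rw [this, pow_add, pow_succ]; rfl
    rw [e1, e2, hsymm (m+1), e2, e3, hsymm m, ← hh]
    have := aux_key T hT hTpos h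
    rw [← real_inner_self_eq_norm_sq] at this
    exact this

end Aux

/-- For a bounded operator `R : H₂ → H₁` and a bounded
self-adjoint positive operator `T` on `H₂`,
`‖R T^{k+1} R*‖ ≤ ‖T‖ · ‖R T^k R*‖` for every `k ∈ ℕ`. -/
theorem norm_RTk_monotone
    {H₁ H₂ : Type*} [NormedAddCommGroup H₁] [InnerProductSpace ℝ H₁] [CompleteSpace H₁]
    [NormedAddCommGroup H₂] [InnerProductSpace ℝ H₂] [CompleteSpace H₂]
    (R : H₂ →L[ℝ] H₁) (T : H₂ →L[ℝ] H₂)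
    (hT : IsSelfAdjoint T) (hTpos : ∀ g : H₂, 0 ≤ (inner ℝ (T g) g : ℝ)) (k : ℕ) :
    ‖R ∘L (T ^ (k + 1)) ∘L adjoint R‖ ≤ ‖T‖ * ‖R ∘L (T ^ k) ∘L adjoint R‖ := by
  set A := R ∘L (T ^ (k + 1)) ∘L adjoint R with hA
  set B := R ∘L (T ^ k) ∘L adjoint R with hB
  -- A is positive (hence self-adjoint)
  have hTn : ∀ n : ℕ, (T ^ n).IsPositive := by
    intro n
    refine ⟨(isSelfAdjoint_iff_isSymmetric).mp (hT.pow n), fun x => ?_⟩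
    simpa [ContinuousLinearMap.reApplyInnerSelf] using aux_pow_pos T hT hTpos n x
  have hApos : A.IsPositive := (hTn (k + 1)).conj_adjoint R
  -- inner products transform
  have hinner : ∀ (n : ℕ) (x : H₁),
      (inner ℝ ((R ∘L (T ^ n) ∘L adjoint R) x) x : ℝ) =
        inner ℝ ((T ^ n) (adjoint R x)) (adjoint R x) := by
    intro n x
    rw [ContinuousLinearMap.comp_apply, ContinuousLinearMap.comp_apply]
    rw [real_inner_comm, ← ContinuousLinearMap.adjoint_inner_left R]
    exact real_inner_comm _ _
  refine aux_norm_le_of_inner A hApos.isSelfAdjoint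
    (mul_nonneg (norm_nonneg T) (norm_nonneg B)) fun x => ?_
  have habs : |(inner ℝ (A x) x : ℝ)| = inner ℝ (A x) x := by
    refine abs_of_nonneg ?_
    simpa [ContinuousLinearMap.reApplyInnerSelf] using hApos.2 x
  rw [habs, hA, hinner (k + 1) x]
  calc (inner ℝ ((T ^ (k + 1)) (adjoint R x)) (adjoint R x) : ℝ)
      ≤ ‖T‖ * inner ℝ ((T ^ k) (adjoint R x)) (adjoint R x) :=
        aux_step T hT hTpos k (adjoint R x)
    _ = ‖T‖ * inner ℝ (B x) x := by rw [hB, hinner k x]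
    _ ≤ ‖T‖ * (‖B‖ * ‖x‖ ^ 2) := by
        refine mul_le_mul_of_nonneg_left ?_ (norm_nonneg T)
        calc (inner ℝ (B x) x : ℝ) ≤ ‖B x‖ * ‖x‖ := real_inner_le_norm _ _
          _ ≤ (‖B‖ * ‖x‖) * ‖x‖ :=
            mul_le_mul_of_nonneg_right (B.le_opNorm x) (norm_nonneg _)
          _ = ‖B‖ * ‖x‖ ^ 2 := by ring
    _ = ‖T‖ * ‖B‖ * ‖x‖ ^ 2 := by ring
end

section
/- Let H₁ and H₂ be Hilbert spaces, R : H₂ → H₁ a bounded linear operator with ‖R R*‖ ≤ 1, and T : H₂ → H₂ a bounded self-adjoint positive operator. Then for every k ∈ ℕ, ‖R T R*‖^{2^k} ≤ ‖R T^{2^k} R*‖. -/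
open ContinuousLinearMap

section Aux

variable {H₁ H₂ : Type*} [NormedAddCommGroup H₁] [InnerProductSpace ℝ H₁] [CompleteSpace H₁]
    [NormedAddCommGroup H₂] [InnerProductSpace ℝ H₂] [CompleteSpace H₂]

/-- Symmetry of a self-adjoint operator against the real inner product. -/
lemma aux_sym_inner (S : H₂ →L[ℝ] H₂) (hS : IsSelfAdjoint S) (u v : H₂) :
    (inner ℝ (S u) v : ℝ) = inner ℝ u (S v) := by
  conv_lhs => rw [← hS.adjoint_eq]
  exact adjoint_inner_left S v u

/-- For a self-adjoint `A` with `|⟨Ax,x⟩| ≤ c‖x‖²`, we have `‖A‖ ≤ c`. -/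
lemma aux_symm_norm_le (A : H₂ →L[ℝ] H₂) (hA : IsSelfAdjoint A) {c : ℝ} (hc : 0 ≤ c)
    (h : ∀ x : H₂, |(inner ℝ (A x) x : ℝ)| ≤ c * ‖x‖ ^ 2) : ‖A‖ ≤ c := by
  have hsym : ∀ x y : H₂, (inner ℝ (A x) y : ℝ) = inner ℝ x (A y) := by
    intro x y
    conv_lhs => rw [← hA.adjoint_eq]
    exact adjoint_inner_left A y x
  apply opNorm_le_bound _ hc
  intro x
  rcases eq_or_ne (A x) 0 with hAx | hAx
  · simp only [hAx, norm_zero]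
    positivity
  rcases eq_or_ne x 0 with hx | hx
  · exact absurd (hx ▸ map_zero A) hAx
  set y : H₂ := (‖x‖ / ‖A x‖) • A x with hy
  have hAxpos : (0:ℝ) < ‖A x‖ := norm_pos_iff.mpr hAx
  have hxpos : (0:ℝ) < ‖x‖ := norm_pos_iff.mpr hx
  have hny : ‖y‖ = ‖x‖ := by
    rw [hy, norm_smul]
    rw [Real.norm_eq_abs, abs_div, abs_of_nonneg hxpos.le, abs_of_nonneg hAxpos.le]
    field_simp
  have hinner : (inner ℝ (A x) y : ℝ) = ‖x‖ * ‖A x‖ := by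
    rw [hy, real_inner_smul_right, real_inner_self_eq_norm_sq]
    field_simp
  have hpol : 4 * (inner ℝ (A x) y : ℝ) =
      (inner ℝ (A (x + y)) (x + y) : ℝ) - inner ℝ (A (x - y)) (x - y) := by
    have h1 : (inner ℝ (A y) x : ℝ) = inner ℝ (A x) y := by
      rw [hsym y x, real_inner_comm]
    simp only [map_add, map_sub, inner_add_left, inner_add_right, inner_sub_left,
      inner_sub_right]
    rw [h1]; ring
  have hb : 4 * (inner ℝ (A x) y : ℝ) ≤ c * ‖x + y‖ ^ 2 + c * ‖x - y‖ ^ 2 := by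
    rw [hpol]
    have h1 := (abs_le.mp (h (x + y))).2
    have h2 := (abs_le.mp (h (x - y))).1
    linarith
  have hpar : ‖x + y‖ ^ 2 + ‖x - y‖ ^ 2 = 2 * (‖x‖ ^ 2 + ‖y‖ ^ 2) := by
    have := parallelogram_law_with_norm ℝ x y
    nlinarith [this]
  rw [hinner] at hb
  have h4 : ‖x‖ * ‖A x‖ ≤ c * ‖x‖ ^ 2 := by
    have hc2 : c * (‖x + y‖ ^ 2 + ‖x - y‖ ^ 2) = 4 * (c * ‖x‖ ^ 2) := by
      rw [hpar, hny]; ring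
    nlinarith
  have := (mul_le_mul_iff_right₀ hxpos).mp (by nlinarith : ‖x‖ * ‖A x‖ ≤ ‖x‖ * (c * ‖x‖))
  linarith

/-- Key squaring step. -/
lemma aux_key_s17 (R : H₂ →L[ℝ] H₁) (hR : ‖R ∘L adjoint R‖ ≤ 1) (S : H₂ →L[ℝ] H₂)
    (hS : IsSelfAdjoint S) (hSpos : ∀ g : H₂, 0 ≤ (inner ℝ (S g) g : ℝ)) :
    ‖R ∘L S ∘L adjoint R‖ ^ 2 ≤ ‖R ∘L (S ∘L S) ∘L adjoint R‖ := by
  set c := ‖R ∘L (S ∘L S) ∘L adjoint R‖ with hc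
  have hc0 : 0 ≤ c := norm_nonneg _
  have hAsa : IsSelfAdjoint (R ∘L S ∘L adjoint R) := by
    rw [isSelfAdjoint_iff']
    rw [adjoint_comp, adjoint_comp, adjoint_adjoint, hS.adjoint_eq, comp_assoc]
  have key : ∀ x : H₁, |(inner ℝ ((R ∘L S ∘L adjoint R) x) x : ℝ)| ≤
      Real.sqrt c * ‖x‖ ^ 2 := by
    intro x
    set g := adjoint R x with hg
    have e1 : (inner ℝ ((R ∘L S ∘L adjoint R) x) x : ℝ) = inner ℝ (S g) g := by
      simp only [comp_apply]
      exact (adjoint_inner_right R (S g) x).symm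
    have hpos : 0 ≤ (inner ℝ (S g) g : ℝ) := hSpos g
    have hcs : (inner ℝ (S g) g : ℝ) ^ 2 ≤ ‖S g‖ ^ 2 * ‖g‖ ^ 2 := by
      have h1 := abs_real_inner_le_norm (S g) g
      have h2 := abs_nonneg (inner ℝ (S g) g : ℝ)
      have h3 : (inner ℝ (S g) g : ℝ) ^ 2 = |(inner ℝ (S g) g : ℝ)| ^ 2 := (sq_abs _).symm
      rw [h3]
      nlinarith [norm_nonneg (S g), norm_nonneg g]
    have hSg : ‖S g‖ ^ 2 = (inner ℝ ((S ∘L S) g) g : ℝ) := by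
      simp only [comp_apply]
      rw [← real_inner_self_eq_norm_sq]
      rw [aux_sym_inner S hS (S g) g]
    have h2 : (inner ℝ ((S ∘L S) g) g : ℝ) = inner ℝ ((R ∘L (S ∘L S) ∘L adjoint R) x) x := by
      simp only [comp_apply]
      exact adjoint_inner_right R (S (S g)) x
    have h3 : (inner ℝ ((R ∘L (S ∘L S) ∘L adjoint R) x) x : ℝ) ≤ c * ‖x‖ ^ 2 := by
      calc (inner ℝ ((R ∘L (S ∘L S) ∘L adjoint R) x) x : ℝ)
          ≤ ‖(R ∘L (S ∘L S) ∘L adjoint R) x‖ * ‖x‖ := real_inner_le_norm _ _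
        _ ≤ c * ‖x‖ * ‖x‖ := by gcongr; exact le_opNorm _ _
        _ = c * ‖x‖ ^ 2 := by ring
    have h4 : ‖g‖ ^ 2 ≤ ‖x‖ ^ 2 := by
      have he : ‖g‖ ^ 2 = (inner ℝ ((R ∘L adjoint R) x) x : ℝ) := by
        simp only [comp_apply]
        rw [← real_inner_self_eq_norm_sq]
        exact adjoint_inner_right R ((adjoint R) x) x
      rw [he]
      calc (inner ℝ ((R ∘L adjoint R) x) x : ℝ) ≤ ‖(R ∘L adjoint R) x‖ * ‖x‖ :=
            real_inner_le_norm _ _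
        _ ≤ ‖R ∘L adjoint R‖ * ‖x‖ * ‖x‖ := by gcongr; exact le_opNorm _ _
        _ ≤ 1 * ‖x‖ * ‖x‖ := by
            exact mul_le_mul_of_nonneg_right
              (mul_le_mul_of_nonneg_right hR (norm_nonneg x)) (norm_nonneg x)
        _ = ‖x‖ ^ 2 := by ring
    have hq : 0 ≤ (inner ℝ ((S ∘L S) g) g : ℝ) := by rw [← hSg]; positivity
    have h5 : (inner ℝ (S g) g : ℝ) ^ 2 ≤ c * ‖x‖ ^ 2 * ‖x‖ ^ 2 := by
      calc (inner ℝ (S g) g : ℝ) ^ 2 ≤ ‖S g‖ ^ 2 * ‖g‖ ^ 2 := hcs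
        _ ≤ (inner ℝ ((S ∘L S) g) g : ℝ) * ‖x‖ ^ 2 := by rw [← hSg]; nlinarith [sq_nonneg ‖S g‖]
        _ = (inner ℝ ((R ∘L (S ∘L S) ∘L adjoint R) x) x : ℝ) * ‖x‖ ^ 2 := by rw [h2]
        _ ≤ c * ‖x‖ ^ 2 * ‖x‖ ^ 2 := by nlinarith [sq_nonneg ‖x‖, h2 ▸ hq]
    rw [e1, abs_of_nonneg hpos]
    have hsq : (inner ℝ (S g) g : ℝ) ^ 2 ≤ (Real.sqrt c * ‖x‖ ^ 2) ^ 2 := by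
      have he : (Real.sqrt c * ‖x‖ ^ 2) ^ 2 = c * ‖x‖ ^ 2 * ‖x‖ ^ 2 := by
        rw [mul_pow, Real.sq_sqrt hc0]; ring
      linarith [he.ge]
    have := Real.sqrt_le_sqrt hsq
    rwa [Real.sqrt_sq hpos, Real.sqrt_sq (by positivity)] at this
  have hA : ‖R ∘L S ∘L adjoint R‖ ≤ Real.sqrt c :=
    aux_symm_norm_le _ hAsa (Real.sqrt_nonneg c) key
  calc ‖R ∘L S ∘L adjoint R‖ ^ 2 ≤ Real.sqrt c ^ 2 := by
        gcongr
    _ = c := Real.sq_sqrt hc0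

end Aux

/-- For a bounded operator `R : H₂ → H₁` with `‖R R*‖ ≤ 1` and a
bounded self-adjoint positive operator `T` on `H₂`,
`‖R T R*‖^{2^k} ≤ ‖R T^{2^k} R*‖` for every `k ∈ ℕ`. -/
theorem norm_RTR_pow_two_pow_le
    {H₁ H₂ : Type*} [NormedAddCommGroup H₁] [InnerProductSpace ℝ H₁] [CompleteSpace H₁]
    [NormedAddCommGroup H₂] [InnerProductSpace ℝ H₂] [CompleteSpace H₂]
    (R : H₂ →L[ℝ] H₁) (hR : ‖R ∘L adjoint R‖ ≤ 1) (T : H₂ →L[ℝ] H₂)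
    (hT : IsSelfAdjoint T) (hTpos : ∀ g : H₂, 0 ≤ (inner ℝ (T g) g : ℝ)) (k : ℕ) :
    ‖R ∘L T ∘L adjoint R‖ ^ (2 ^ k) ≤ ‖R ∘L (T ^ (2 ^ k)) ∘L adjoint R‖ := by
  induction k with
  | zero => simp
  | succ k ih =>
    have hSsa : IsSelfAdjoint (T ^ (2 ^ k)) := hT.pow _
    have hSpos : ∀ g : H₂, 0 ≤ (inner ℝ ((T ^ (2 ^ k)) g) g : ℝ) := by
      intro g
      rcases Nat.eq_zero_or_pos k with hk | hk
      · subst hk; simpa using hTpos g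
      · obtain ⟨m, hm⟩ : ∃ m, 2 ^ k = m + m := ⟨2 ^ (k - 1), by
          rw [← two_mul, ← pow_succ']
          congr 1
          omega⟩
        rw [hm, pow_add]
        have hmsa : IsSelfAdjoint (T ^ m) := hT.pow _
        rw [ContinuousLinearMap.mul_apply, aux_sym_inner (T ^ m) hmsa ((T ^ m) g) g]
        exact real_inner_self_nonneg
    have key := aux_key_s17 R hR (T ^ (2 ^ k)) hSsa hSpos
    have hsq : T ^ (2 ^ (k + 1)) = (T ^ (2 ^ k)) ∘L (T ^ (2 ^ k)) := by
      rw [pow_succ, pow_mul]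
      rfl
    calc ‖R ∘L T ∘L adjoint R‖ ^ (2 ^ (k + 1))
        = (‖R ∘L T ∘L adjoint R‖ ^ (2 ^ k)) ^ 2 := by
          rw [← pow_mul, pow_succ]
      _ ≤ ‖R ∘L (T ^ (2 ^ k)) ∘L adjoint R‖ ^ 2 := by
          gcongr
      _ ≤ ‖R ∘L ((T ^ (2 ^ k)) ∘L (T ^ (2 ^ k))) ∘L adjoint R‖ := key
      _ = ‖R ∘L (T ^ (2 ^ (k + 1))) ∘L adjoint R‖ := by rw [hsq]
end
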